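/- arXiv:1603.06905 — 12 statements merged into one kernel-verified Lean document; each statement's English description precedes it below -/
import Mathlib

section
/- If a continuous function g from [0,1] to itself satisfies g^p(x) = x for all x in [0,1] for some natural number p ≥ 1, then g^2(x) = x for all x. In particular, if p is odd, then g(x) = x for all x. -/
open Set Function

private lemma iter_lt_aux {f : ℝ → ℝ} (hm : MapsTo f (Icc (0:ℝ) 1) (Icc 0 1))
    (hmono : StrictMonoOn f (Icc (0:ℝ) 1)) {x : ℝ} (hx : x ∈ Icc (0:ℝ) 1)
    (hlt : x < f x) : ∀ n, x < f^[n+1] x := by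
  intro n
  induction n with
  | zero => simpa using hlt
  | succ n ih =>
    have hmem : f^[n+1] x ∈ Icc (0:ℝ) 1 := hm.iterate (n+1) hx
    have h2 : f x < f (f^[n+1] x) := hmono hx hmem ih
    have : x < f (f^[n+1] x) := hlt.trans h2
    rwa [← Function.iterate_succ_apply' f (n+1) x] at this

private lemma iter_gt_aux {f : ℝ → ℝ} (hm : MapsTo f (Icc (0:ℝ) 1) (Icc 0 1))
    (hmono : StrictMonoOn f (Icc (0:ℝ) 1)) {x : ℝ} (hx : x ∈ Icc (0:ℝ) 1)
    (hlt : f x < x) : ∀ n, f^[n+1] x < x := by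
  intro n
  induction n with
  | zero => simpa using hlt
  | succ n ih =>
    have hmem : f^[n+1] x ∈ Icc (0:ℝ) 1 := hm.iterate (n+1) hx
    have h2 : f (f^[n+1] x) < f x := hmono hmem hx ih
    have : f (f^[n+1] x) < x := h2.trans hlt
    rwa [← Function.iterate_succ_apply' f (n+1) x] at this

private lemma mono_fix_aux {f : ℝ → ℝ} (hm : MapsTo f (Icc (0:ℝ) 1) (Icc 0 1))
    (hmono : StrictMonoOn f (Icc (0:ℝ) 1)) {k : ℕ} (hk : 1 ≤ k)
    (hiter : ∀ x ∈ Icc (0:ℝ) 1, f^[k] x = x) :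
    ∀ x ∈ Icc (0:ℝ) 1, f x = x := by
  intro x hx
  obtain ⟨m, rfl⟩ : ∃ m, k = m + 1 := ⟨k - 1, (Nat.succ_pred_eq_of_pos hk).symm⟩
  rcases lt_trichotomy (f x) x with h | h | h
  · exact absurd (hiter x hx) (iter_gt_aux hm hmono hx h m).ne
  · exact h
  · exact absurd (hiter x hx) (iter_lt_aux hm hmono hx h m).ne'

private lemma anti_sq_mono {g : ℝ → ℝ} (hm : MapsTo g (Icc (0:ℝ) 1) (Icc 0 1))
    (hanti : StrictAntiOn g (Icc (0:ℝ) 1)) :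
    StrictMonoOn (g^[2]) (Icc (0:ℝ) 1) := by
  intro x hx y hy hxy
  show g (g x) < g (g y)
  exact hanti (hm hy) (hm hx) (hanti hx hy hxy)

private lemma anti_odd_iter {g : ℝ → ℝ} (hm : MapsTo g (Icc (0:ℝ) 1) (Icc 0 1))
    (hanti : StrictAntiOn g (Icc (0:ℝ) 1)) :
    ∀ m, StrictAntiOn (g^[2*m+1]) (Icc (0:ℝ) 1) := by
  intro m
  induction m with
  | zero => simpa using hanti
  | succ m ih =>
    intro x hx y hy hxy
    have hx2 : g^[2] x ∈ Icc (0:ℝ) 1 := hm.iterate 2 hx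
    have hy2 : g^[2] y ∈ Icc (0:ℝ) 1 := hm.iterate 2 hy
    have h1 : g^[2] x < g^[2] y := anti_sq_mono hm hanti hx hy hxy
    have h2 : g^[2*m+1] (g^[2] y) < g^[2*m+1] (g^[2] x) := ih hx2 hy2 h1
    have e : ∀ z, g^[2*(m+1)+1] z = g^[2*m+1] (g^[2] z) := by
      intro z
      rw [← Function.iterate_add_apply]
      ring_nf
    rw [e x, e y]
    exact h2

theorem stmt_0 (g : ℝ → ℝ) (hg : ContinuousOn g (Set.Icc 0 1))
    (hmaps : Set.MapsTo g (Set.Icc 0 1) (Set.Icc 0 1))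
    (p : ℕ) (hp : 1 ≤ p) (hiter : ∀ x ∈ Set.Icc (0:ℝ) 1, g^[p] x = x) :
    (∀ x ∈ Set.Icc (0:ℝ) 1, g^[2] x = x) ∧
      (Odd p → ∀ x ∈ Set.Icc (0:ℝ) 1, g x = x) := by
  obtain ⟨m, rfl⟩ : ∃ m, p = m + 1 := ⟨p - 1, (Nat.succ_pred_eq_of_pos hp).symm⟩
  have hinj : InjOn g (Icc (0:ℝ) 1) := by
    intro x hx y hy hxy
    have : g^[m+1] x = g^[m+1] y := by
      rw [Function.iterate_succ_apply, Function.iterate_succ_apply, hxy]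
    rwa [hiter x hx, hiter y hy] at this
  rcases ContinuousOn.strictMonoOn_of_injOn_Icc' (by norm_num : (0:ℝ) ≤ 1) hg hinj with
    hmono | hanti
  · -- g = id
    have hid : ∀ x ∈ Icc (0:ℝ) 1, g x = x := mono_fix_aux hmaps hmono hp hiter
    refine ⟨fun x hx => ?_, fun _ => hid⟩
    have h1 : g x = x := hid x hx
    show g (g x) = x
    rw [h1, h1]
  · -- g strictly decreasing: p must be even
    have hpe : Even (m + 1) := by
      by_contra hodd
      rw [Nat.not_even_iff_odd] at hodd
      obtain ⟨k, hk⟩ := hodd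
      have hanti' := anti_odd_iter hmaps hanti k
      rw [← hk] at hanti'
      have h01 : g^[m+1] 1 < g^[m+1] 0 :=
        hanti' (by norm_num) (by norm_num) (by norm_num)
      rw [hiter 0 (by norm_num), hiter 1 (by norm_num)] at h01
      linarith
    obtain ⟨k, hk⟩ := hpe
    have hk' : m + 1 = 2 * k := by omega
    have hk1 : 1 ≤ k := by omega
    have hsqmono := anti_sq_mono hmaps hanti
    have hsqmaps : MapsTo (g^[2]) (Icc (0:ℝ) 1) (Icc 0 1) := hmaps.iterate 2
    have hsqiter : ∀ x ∈ Icc (0:ℝ) 1, (g^[2])^[k] x = x := by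
      intro x hx
      rw [← Function.iterate_mul, ← hk']
      exact hiter x hx
    have hid2 := mono_fix_aux hsqmaps hsqmono hk1 hsqiter
    refine ⟨hid2, fun hodd => ?_⟩
    exact absurd hodd (by simpa [Nat.not_odd_iff_even] using ⟨k, by omega⟩)
end

section
/- If a continuous map f of the interval [0,1] into itself satisfies f^n = f for some n ≥ 2, then f^3 = f. -/
open Set Function

/-- A strictly increasing self-map of a set with an iterate equal to the identity
is the identity. -/
lemma key_mono {A : Set ℝ} {h : ℝ → ℝ} (hm : StrictMonoOn h A)
    (hmap : Set.MapsTo h A A) {m : ℕ} (hm1 : 1 ≤ m)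
    (hid : ∀ a ∈ A, h^[m] a = a) : ∀ a ∈ A, h a = a := by
  intro a ha
  have iterA : ∀ k, h^[k + 1] a ∈ A := by
    intro k
    induction k with
    | zero => simpa using hmap ha
    | succ k ih =>
      rw [Function.iterate_succ_apply']
      exact hmap ih
  rcases lt_trichotomy (h a) a with hlt | he | hgt
  · exfalso
    have H : ∀ k, h^[k + 1] a < a := by
      intro k
      induction k with
      | zero => simpa using hlt
      | succ k ih =>
        rw [Function.iterate_succ_apply']
        exact lt_trans (hm (iterA k) ha ih) hlt
    have := H (m - 1)
    rw [Nat.sub_add_cancel hm1, hid a ha] at this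
    exact lt_irrefl a this
  · exact he
  · exfalso
    have H : ∀ k, a < h^[k + 1] a := by
      intro k
      induction k with
      | zero => simpa using hgt
      | succ k ih =>
        rw [Function.iterate_succ_apply']
        exact lt_trans hgt (hm ha (iterA k) ih)
    have := H (m - 1)
    rw [Nat.sub_add_cancel hm1, hid a ha] at this
    exact lt_irrefl a this

theorem stmt_1 (f : ℝ → ℝ) (hf : ContinuousOn f (Set.Icc 0 1))
    (hmaps : Set.MapsTo f (Set.Icc 0 1) (Set.Icc 0 1))
    (n : ℕ) (hn : 2 ≤ n) (hiter : ∀ x ∈ Set.Icc (0:ℝ) 1, f^[n] x = f x) :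
    ∀ x ∈ Set.Icc (0:ℝ) 1, f^[3] x = f x := by
  set I : Set ℝ := Set.Icc 0 1 with hI
  set A : Set ℝ := f '' I with hA
  have hAI : A ⊆ I := hmaps.image_subset
  have hfA : Set.MapsTo f A A := fun a ha => ⟨a, hAI ha, rfl⟩
  -- f^[n-1] is the identity on A
  have hfix : ∀ a ∈ A, f^[n - 1] a = a := by
    rintro a ⟨x, hx, rfl⟩
    have : f^[n - 1] (f x) = f^[n] x := by
      rw [← Function.iterate_succ_apply]
      congr 1
      omega
    rw [this, hiter x hx]
  -- all iterates of f map A into A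
  have hiterA : ∀ k, Set.MapsTo f^[k] A A := fun k => hfA.iterate k
  -- f is injective on A
  have hinj : Set.InjOn f A := by
    intro a ha b hb hab
    have h1 : f^[n - 2] (f a) = f^[n - 2] (f b) := by rw [hab]
    rw [← Function.iterate_succ_apply, ← Function.iterate_succ_apply] at h1
    have hn2 : (n - 2).succ = n - 1 := by omega
    rw [hn2] at h1
    rw [← hfix a ha, ← hfix b hb, h1]
  -- A is a closed interval
  have h01 : (0:ℝ) ≤ 1 := zero_le_one
  have hAIcc : A = Set.Icc (sInf A) (sSup A) := ContinuousOn.image_Icc h01 hf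
  have hab : sInf A ≤ sSup A := by
    obtain ⟨a, ha⟩ : A.Nonempty := ⟨f 0, 0, Set.left_mem_Icc.2 h01, rfl⟩
    rw [hAIcc] at ha
    exact le_trans ha.1 ha.2
  have hfc : ContinuousOn f A := hf.mono hAI
  have hinj' : Set.InjOn f (Set.Icc (sInf A) (sSup A)) := hAIcc ▸ hinj
  have hfc' : ContinuousOn f (Set.Icc (sInf A) (sSup A)) := hAIcc ▸ hfc
  -- main claim: f ∘ f = id on A
  have hkey : ∀ a ∈ A, f (f a) = a := by
    rcases ContinuousOn.strictMonoOn_of_injOn_Icc' hab hfc' hinj' with hmono | hanti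
    · -- increasing case: f = id on A
      have hmono' : StrictMonoOn f A := hAIcc ▸ hmono
      have hid := key_mono hmono' hfA (m := n - 1) (by omega) hfix
      intro a ha
      rw [hid a ha, hid a ha]
    · -- decreasing case: f ∘ f = id on A
      have hanti' : StrictAntiOn f A := hAIcc ▸ hanti
      have hmono2 : StrictMonoOn (f ∘ f) A := by
        intro a ha b hb hlt
        exact hanti' (hfA hb) (hfA ha) (hanti' ha hb hlt)
      have hmap2 : Set.MapsTo (f ∘ f) A A := hfA.comp hfA
      have hid2 : ∀ a ∈ A, (f ∘ f)^[n - 1] a = a := by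
        intro a ha
        have h2 : f ∘ f = f^[2] := by
          funext y; simp [Function.iterate_succ_apply]
        have : (f ∘ f)^[n - 1] a = f^[n - 1] (f^[n - 1] a) := by
          rw [h2, ← Function.iterate_mul, ← Function.iterate_add_apply]
          congr 1
          omega
        rw [this, hfix a ha, hfix a ha]
      have := key_mono hmono2 hmap2 (m := n - 1) (by omega) hid2
      intro a ha
      exact this a ha
  intro x hx
  have hfx : f x ∈ A := ⟨x, hx, rfl⟩
  show f^[3] x = f x
  have : f^[3] x = f (f (f x)) := by
    rw [show (3:ℕ) = 2 + 1 from rfl, Function.iterate_succ_apply]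
    rfl
  rw [this, hkey (f x) hfx]
end

section
/- Let f : [0,1] → [0,1] be continuous. Then f^2 = f (f is idempotent under composition) if and only if there exist reals a, b with 0 ≤ a ≤ b ≤ 1 such that f(x) = x for all x in [a,b], f maps [0,a] into [a,b], and f maps [b,1] into [a,b]. -/
theorem stmt_2 (f : ℝ → ℝ) (hf : ContinuousOn f (Set.Icc 0 1))
    (hmaps : Set.MapsTo f (Set.Icc 0 1) (Set.Icc 0 1)) :
    (∀ x ∈ Set.Icc (0:ℝ) 1, f (f x) = f x) ↔
      ∃ a b : ℝ, 0 ≤ a ∧ a ≤ b ∧ b ≤ 1 ∧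
        (∀ x ∈ Set.Icc a b, f x = x) ∧
        Set.MapsTo f (Set.Icc 0 a) (Set.Icc a b) ∧
        Set.MapsTo f (Set.Icc b 1) (Set.Icc a b) := by
  constructor
  · intro h
    set K := f '' Set.Icc (0:ℝ) 1 with hK
    have himg : K = Set.Icc (sInf K) (sSup K) := hf.image_Icc (by norm_num)
    set a := sInf K
    set b := sSup K
    have hKsub : K ⊆ Set.Icc (0:ℝ) 1 := hmaps.image_subset
    have hne : K.Nonempty := ⟨f 0, ⟨0, by norm_num, rfl⟩⟩
    have hab : a ≤ b := by
      obtain ⟨y, hy⟩ := hne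
      rw [himg] at hy
      exact le_trans hy.1 hy.2
    have h0a : 0 ≤ a := by
      obtain ⟨y, hy⟩ := hne
      have : Set.Icc a b ⊆ Set.Icc (0:ℝ) 1 := himg ▸ hKsub
      exact (this (Set.left_mem_Icc.mpr hab)).1
    have hb1 : b ≤ 1 := by
      have : Set.Icc a b ⊆ Set.Icc (0:ℝ) 1 := himg ▸ hKsub
      exact (this (Set.right_mem_Icc.mpr hab)).2
    have hfix : ∀ y ∈ K, f y = y := by
      rintro y ⟨x, hx, rfl⟩
      exact h x hx
    refine ⟨a, b, h0a, hab, hb1, by rw [← himg]; exact hfix, ?_, ?_⟩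
    · intro x hx
      rw [← himg]
      exact ⟨x, ⟨hx.1, le_trans hx.2 (le_trans hab hb1)⟩, rfl⟩
    · intro x hx
      rw [← himg]
      exact ⟨x, ⟨le_trans (le_trans h0a hab) hx.1, hx.2⟩, rfl⟩
  · rintro ⟨a, b, h0a, hab, hb1, hfix, hm1, hm2⟩ x hx
    have hfxab : f x ∈ Set.Icc a b := by
      rcases le_or_gt x a with hxa | hxa
      · exact hm1 ⟨hx.1, hxa⟩
      rcases le_or_gt x b with hxb | hxb
      · rw [hfix x ⟨hxa.le, hxb⟩]; exact ⟨hxa.le, hxb⟩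
      · exact hm2 ⟨hxb.le, hx.2⟩
    exact hfix _ hfxab
end

section
/- If a continuous map f : [0,1] → [0,1] has a periodic point of period m > 2, then the cardinalities of orbits of f are not uniformly bounded: for every N there exists a point whose forward orbit has more than N elements. -/
/-- A strictly monotone self-map of a set has no nontrivial periodic points. -/
lemma aux_no_per (g : ℝ → ℝ) (J : Set ℝ) (hmono : StrictMonoOn g J)
    (hmapsJ : Set.MapsTo g J J) (x : ℝ) (hx : x ∈ J) (K : ℕ) (hK : 0 < K)
    (hgx : g x ≠ x) (hxK : g^[K] x = x) : False := by
  have hmem : ∀ k, g^[k] x ∈ J := fun k => hmapsJ.iterate k hx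
  rcases hgx.lt_or_gt with h | h
  · have step : ∀ k, g^[k+1] x < g^[k] x := by
      intro k; induction k with
      | zero => simpa using h
      | succ n ih =>
        have := hmono (hmem (n+1)) (hmem n) ih
        simpa [Function.iterate_succ_apply'] using this
    have dec : ∀ k, 0 < k → g^[k] x < x := by
      intro k hk; induction k with
      | zero => omega
      | succ n ih =>
        rcases Nat.eq_zero_or_pos n with rfl | hn
        · simpa using h
        · exact lt_trans (step n) (ih hn)
    exact absurd hxK (ne_of_lt (dec K hK))
  · have step : ∀ k, g^[k] x < g^[k+1] x := by
      intro k; induction k with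
      | zero => simpa using h
      | succ n ih =>
        have := hmono (hmem n) (hmem (n+1)) ih
        simpa [Function.iterate_succ_apply'] using this
    have inc : ∀ k, 0 < k → x < g^[k] x := by
      intro k hk; induction k with
      | zero => omega
      | succ n ih =>
        rcases Nat.eq_zero_or_pos n with rfl | hn
        · simpa using h
        · exact lt_trans (ih hn) (step n)
    exact absurd hxK (ne_of_gt (inc K hK))

theorem stmt_3 (f : ℝ → ℝ) (hf : ContinuousOn f (Set.Icc 0 1))
    (hmaps : Set.MapsTo f (Set.Icc 0 1) (Set.Icc 0 1))
    (m : ℕ) (hm : 2 < m) (x : ℝ) (hx : x ∈ Set.Icc (0:ℝ) 1)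
    (hper : f^[m] x = x) (hmin : ∀ j : ℕ, 0 < j → j < m → f^[j] x ≠ x) :
    ∀ N : ℕ, ∃ y ∈ Set.Icc (0:ℝ) 1, ∃ t : Finset ℝ,
      ↑t ⊆ Set.range (fun k : ℕ => f^[k] y) ∧ N < t.card := by
  by_contra hcon
  push_neg at hcon
  obtain ⟨N, hN⟩ := hcon
  set S : Set ℝ := Set.Icc (0:ℝ) 1 with hS
  -- pigeonhole: every orbit repeats within N steps
  have pigeon : ∀ y ∈ S, ∃ i j, i < j ∧ j ≤ N ∧ f^[i] y = f^[j] y := by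
    intro y hy
    have hsub : ↑((Finset.range (N+1)).image (fun k => f^[k] y)) ⊆
        Set.range (fun k : ℕ => f^[k] y) := by
      intro z hz
      simp only [Finset.coe_image, Set.mem_image] at hz
      obtain ⟨k, _, rfl⟩ := hz
      exact ⟨k, rfl⟩
    have hcard := hN y hy _ hsub
    by_contra hc; push_neg at hc
    have hinj : Set.InjOn (fun k => f^[k] y) (Finset.range (N+1)) := by
      intro i hi j hj hij
      simp only [Finset.coe_range, Set.mem_Iio] at hi hj
      rcases lt_trichotomy i j with h | h | h
      · exact absurd hij (hc i j h (by omega))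
      · exact h
      · exact absurd hij.symm (hc j i h (by omega))
    rw [Finset.card_image_of_injOn hinj, Finset.card_range] at hcard
    omega
  set M := N.factorial with hMdef
  have hMpos : 0 < M := N.factorial_pos
  have key : ∀ y ∈ S, f^[M] (f^[N] y) = f^[N] y := by
    intro y hy
    obtain ⟨i, j, hij, hjN, heq⟩ := pigeon y hy
    have hp : f^[j-i] (f^[i] y) = f^[i] y := by
      rw [← Function.iterate_add_apply, (by omega : j - i + i = j)]
      exact heq.symm
    have hmul : ∀ c, f^[(j-i)*c] (f^[i] y) = f^[i] y := by
      intro c; induction c with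
      | zero => simp
      | succ n ih => rw [Nat.mul_succ, Function.iterate_add_apply, hp, ih]
    obtain ⟨c, hc⟩ : (j - i) ∣ M := Nat.dvd_factorial (by omega) (by omega)
    have hp2 : f^[M] (f^[i] y) = f^[i] y := by rw [hc]; exact hmul c
    have hNy : f^[N] y = f^[N - i] (f^[i] y) := by
      rw [← Function.iterate_add_apply, (by omega : N - i + i = N)]
    rw [hNy, ← Function.iterate_add_apply, (by omega : M + (N - i) = (N - i) + M),
      Function.iterate_add_apply, hp2]
  set J : Set ℝ := f^[N] '' S with hJdef
  have hJS : J ⊆ S := Set.image_subset_iff.mpr (hmaps.iterate N)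
  have hfJ : Set.MapsTo f J J := by
    rintro z ⟨y, hy, rfl⟩
    exact ⟨f y, hmaps hy, (Function.iterate_succ_apply f N y).symm.trans
      (Function.iterate_succ_apply' f N y)⟩
  have hMz : ∀ z ∈ J, f^[M] z = z := by
    rintro z ⟨y, hy, rfl⟩; exact key y hy
  have hxJ : x ∈ J := by
    have hmul : ∀ k, f^[k*m] x = x := by
      intro k; induction k with
      | zero => simp
      | succ n ih => rw [Nat.succ_mul, Function.iterate_add_apply, hper, ih]
    have hNm : N ≤ N * m := Nat.le_mul_of_pos_right N (by omega)
    refine ⟨f^[N*m - N] x, hmaps.iterate _ hx, ?_⟩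
    rw [← Function.iterate_add_apply, (by omega : N + (N*m - N) = N*m), hmul N]
  have hMx : f^[M] x = x := hMz x hxJ
  -- J is a compact interval
  have hcont : ∀ n, ContinuousOn (f^[n]) S := by
    intro n; induction n with
    | zero => simpa using continuousOn_id
    | succ n ih =>
      rw [Function.iterate_succ']
      exact hf.comp ih (hmaps.iterate n)
  have hJcompact : IsCompact J := isCompact_Icc.image_of_continuousOn (hcont N)
  have hJconn : IsPreconnected J := isPreconnected_Icc.image _ (hcont N)
  have hJne : J.Nonempty := ⟨x, hxJ⟩
  have hJIcc : J = Set.Icc (sInf J) (sSup J) :=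
    eq_Icc_csInf_csSup_of_connected_bdd_closed ⟨hJne, hJconn⟩ hJcompact.bddBelow
      hJcompact.bddAbove hJcompact.isClosed
  have hab : sInf J ≤ sSup J := by
    have := hJIcc ▸ hxJ; exact le_trans this.1 this.2
  -- f is injective on J
  have hinj : Set.InjOn f J := by
    have e : ∀ w ∈ J, f^[M-1] (f w) = w := by
      intro w hw
      rw [← Function.iterate_succ_apply, Nat.succ_eq_add_one, (by omega : M - 1 + 1 = M)]
      exact hMz w hw
    intro u hu v hv huv
    rw [← e u hu, ← e v hv, huv]
  have hmono_or := ContinuousOn.strictMonoOn_of_injOn_Icc' hab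
    (hJIcc ▸ hf.mono hJS) (hJIcc ▸ hinj)
  rw [← hJIcc] at hmono_or
  have hfx : f x ≠ x := by simpa using hmin 1 one_pos (by omega)
  rcases hmono_or with hmono | hanti
  · exact aux_no_per f J hmono hfJ x hxJ M hMpos hfx hMx
  · have hgmono : StrictMonoOn (f ∘ f) J := by
      intro u hu v hv huv
      exact hanti (hfJ hv) (hfJ hu) (hanti hu hv huv)
    have hff : f^[2] = f ∘ f := by
      funext z
      rw [(by norm_num : (2:ℕ) = 1 + 1), Function.iterate_add_apply]
      simp
    have hg2 : (f ∘ f) x ≠ x := by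
      rw [← hff]; exact hmin 2 (by omega) hm
    have hgK : (f ∘ f)^[M] x = x := by
      rw [← hff, ← Function.iterate_mul, (by ring : 2 * M = M + M),
        Function.iterate_add_apply, hMx, hMx]
    exact aux_no_per (f ∘ f) J hgmono (hfJ.comp hfJ) x hxJ M hMpos hg2 hgK
end

section
/- If cardinalities of orbits of a continuous map f : [0,1] → [0,1] are uniformly bounded, then the set of fixed points of f^2 is a nonempty closed interval. -/
open Set Function Filter Topology

private lemma aux_iter (g : ℝ → ℝ) (hg : ContinuousOn g (Set.Icc 0 1))
    (hm : Set.MapsTo g (Set.Icc 0 1) (Set.Icc 0 1)) (k : ℕ) :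
    ContinuousOn (g^[k]) (Set.Icc 0 1) ∧ Set.MapsTo (g^[k]) (Set.Icc 0 1) (Set.Icc 0 1) := by
  induction k with
  | zero => simpa using ⟨continuousOn_id, Set.mapsTo_id _⟩
  | succ n ih =>
    rw [Function.iterate_succ']
    exact ⟨hg.comp ih.1 ih.2, hm.comp ih.2⟩

private lemma auxA (N : ℕ) (g : ℝ → ℝ) (hg : ContinuousOn g (Set.Icc 0 1))
    (hm : Set.MapsTo g (Set.Icc 0 1) (Set.Icc 0 1))
    (hb : ∀ x ∈ Set.Icc (0:ℝ) 1, ∀ t : Finset ℝ,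
      ↑t ⊆ Set.range (fun k : ℕ => g^[k] x) → t.card ≤ N)
    (a y : ℝ) (ha : a ∈ Set.Icc (0:ℝ) 1) (hy : y ∈ Set.Icc (0:ℝ) 1) (hay : a ≤ y)
    (hga : g a = a) (hgy : y < g y) : False := by
  have hsub : Set.Icc 0 y ⊆ Set.Icc (0:ℝ) 1 := Set.Icc_subset_Icc le_rfl hy.2
  set T : Set ℝ := {x | x ∈ Set.Icc 0 y ∧ g x = x} with hT
  have hTne : T.Nonempty := ⟨a, ⟨⟨ha.1, hay⟩, hga⟩⟩
  have hTbdd : BddAbove T := ⟨y, fun x hx => hx.1.2⟩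
  have hTclosed : IsClosed T := by
    have : T = Set.Icc 0 y ∩ (fun x => g x - x) ⁻¹' {0} := by
      ext x
      simp only [hT, Set.mem_inter_iff, Set.mem_preimage, Set.mem_singleton_iff,
        sub_eq_zero, Set.mem_setOf_eq]
    rw [this]
    exact ContinuousOn.preimage_isClosed_of_isClosed
      (((hg.mono hsub).sub continuousOn_id)) isClosed_Icc isClosed_singleton
  set a' : ℝ := sSup T with ha'
  have ha'T : a' ∈ T := hTclosed.csSup_mem hTne hTbdd
  have ha'mem : a' ∈ Set.Icc (0:ℝ) 1 := hsub ha'T.1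
  have ha'y : a' < y := by
    rcases lt_or_eq_of_le ha'T.1.2 with h | h
    · exact h
    · rw [h] at ha'T
      exact absurd ha'T.2 (ne_of_gt hgy)
  -- sign: g w > w on Ioc a' y
  have key : ∀ w ∈ Set.Ioc a' y, w < g w := by
    intro w hw
    by_contra hcon
    push_neg at hcon
    have hwmem : w ∈ Set.Icc (0:ℝ) 1 := ⟨le_trans ha'T.1.1 (le_of_lt hw.1), le_trans hw.2 hy.2⟩
    have hne : g w ≠ w := by
      intro heq
      exact absurd (le_csSup hTbdd ⟨⟨hwmem.1, hw.2⟩, heq⟩) (not_le.2 hw.1)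
    have hlt : g w < w := lt_of_le_of_ne hcon hne
    -- IVT on [w, y]
    have hwy : w ≤ y := hw.2
    have hsub2 : Set.Icc w y ⊆ Set.Icc (0:ℝ) 1 := Set.Icc_subset_Icc hwmem.1 hy.2
    have hc : ContinuousOn (fun x => g x - x) (Set.Icc w y) :=
      (hg.mono hsub2).sub continuousOn_id
    have := intermediate_value_Icc hwy hc
    have h0 : (0:ℝ) ∈ Set.Icc (g w - w) (g y - y) := ⟨by linarith, by linarith⟩
    obtain ⟨c, hc1, hc2⟩ := this h0
    have hgc : g c = c := by
      have : g c - c = 0 := hc2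
      linarith
    have hcT : c ∈ T := ⟨⟨le_trans hwmem.1 hc1.1, hc1.2⟩, hgc⟩
    have : c ≤ a' := le_csSup hTbdd hcT
    have : a' < c := lt_of_lt_of_le hw.1 hc1.1
    linarith [le_csSup hTbdd hcT]
  -- neighborhood: find x with long increasing orbit
  have hga' : g a' = a' := ha'T.2
  have hVk : ∀ k, ∀ᶠ x in 𝓝[Set.Icc (0:ℝ) 1] a', g^[k] x < y := by
    intro k
    have hcw : ContinuousWithinAt (g^[k]) (Set.Icc (0:ℝ) 1) a' :=
      (aux_iter g hg hm k).1.continuousWithinAt ha'mem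
    have hfix : g^[k] a' = a' := Function.iterate_fixed hga' k
    have : Set.Iio y ∈ 𝓝 (g^[k] a') := by
      rw [hfix]; exact Iio_mem_nhds ha'y
    exact hcw this
  have hV : ∀ᶠ x in 𝓝[Set.Icc (0:ℝ) 1] a', ∀ k ∈ Finset.range (N+1), g^[k] x < y := by
    rw [Filter.eventually_all_finset]
    intro k _
    exact hVk k
  have hIocsub : Set.Ioc a' y ⊆ Set.Icc (0:ℝ) 1 := fun w hw =>
    ⟨le_trans ha'mem.1 (le_of_lt hw.1), le_trans hw.2 hy.2⟩
  have hV2 : ∀ᶠ x in 𝓝[Set.Ioc a' y] a', ∀ k ∈ Finset.range (N+1), g^[k] x < y :=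
    hV.filter_mono (nhdsWithin_mono _ hIocsub)
  have hne : (𝓝[Set.Ioc a' y] a').NeBot := by
    rw [nhdsWithin_Ioc_eq_nhdsGT ha'y]
    infer_instance
  obtain ⟨x, hxV, hxmem⟩ := (hV2.and eventually_mem_nhdsWithin).exists

  have horb : ∀ k, k ≤ N → g^[k] x ∈ Set.Ioc a' y := by
    intro k
    induction k with
    | zero => intro _; simpa using hxmem
    | succ n ih =>
      intro h
      have hn := ih (Nat.le_of_succ_le h)
      have h1 : g^[n] x < g (g^[n] x) := key _ hn
      rw [Function.iterate_succ_apply']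
      constructor
      · exact lt_trans hn.1 h1
      · have := hxV (n+1) (Finset.mem_range.2 (Nat.lt_succ_of_le h))
        rw [Function.iterate_succ_apply'] at this
        exact le_of_lt this
  have hmono : ∀ i j, i < j → j ≤ N → g^[i] x < g^[j] x := by
    intro i j hij hjN
    induction j with
    | zero => omega
    | succ n ih =>
      have hstep : g^[n] x < g^[n+1] x := by
        rw [Function.iterate_succ_apply']
        exact key _ (horb n (Nat.le_of_succ_le hjN))
      rcases Nat.lt_or_ge i n with h | h
      · exact lt_trans (ih h (Nat.le_of_succ_le hjN)) hstep
      · have : i = n := by omega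
        rw [this]; exact hstep
  have hinj : Set.InjOn (fun k => g^[k] x) (Finset.range (N+1)) := by
    intro i hi j hj hij
    simp only [Finset.coe_range, Set.mem_Iio] at hi hj
    by_contra hne'
    rcases Nat.lt_or_ge i j with h | h
    · exact absurd hij (ne_of_lt (hmono i j h (Nat.lt_succ_iff.1 hj)))
    · have : j < i := by omega
      exact absurd hij.symm (ne_of_lt (hmono j i this (Nat.lt_succ_iff.1 hi)))
  set t : Finset ℝ := (Finset.range (N+1)).image (fun k => g^[k] x) with ht
  have hcard : t.card = N + 1 := by
    rw [ht, Finset.card_image_of_injOn hinj, Finset.card_range]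
  have hsubr : ↑t ⊆ Set.range (fun k : ℕ => g^[k] x) := by
    intro v hv
    simp only [ht, Finset.coe_image, Set.mem_image, Finset.coe_range] at hv
    obtain ⟨k, _, hk⟩ := hv
    exact ⟨k, hk⟩
  have := hb x (hIocsub hxmem) t hsubr
  omega

private lemma refl_mem {x : ℝ} (hx : x ∈ Set.Icc (0:ℝ) 1) : 1 - x ∈ Set.Icc (0:ℝ) 1 := by
  constructor <;> [linarith [hx.2]; linarith [hx.1]]

private lemma auxB (N : ℕ) (g : ℝ → ℝ) (hg : ContinuousOn g (Set.Icc 0 1))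
    (hm : Set.MapsTo g (Set.Icc 0 1) (Set.Icc 0 1))
    (hb : ∀ x ∈ Set.Icc (0:ℝ) 1, ∀ t : Finset ℝ,
      ↑t ⊆ Set.range (fun k : ℕ => g^[k] x) → t.card ≤ N)
    (a b y : ℝ) (ha : a ∈ Set.Icc (0:ℝ) 1) (hbm : b ∈ Set.Icc (0:ℝ) 1)
    (hay : a ≤ y) (hyb : y ≤ b)
    (hga : g a = a) (hgb : g b = b) (hgy : g y ≠ y) : False := by
  have hy : y ∈ Set.Icc (0:ℝ) 1 := ⟨le_trans ha.1 hay, le_trans hyb hbm.2⟩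
  rcases lt_or_gt_of_ne hgy with h | h
  · -- g y < y : reflect
    set h' : ℝ → ℝ := fun x => 1 - g (1 - x) with hh'
    have hrefl : ContinuousOn (fun x : ℝ => 1 - x) (Set.Icc 0 1) :=
      (continuous_const.sub continuous_id).continuousOn
    have hreflm : Set.MapsTo (fun x : ℝ => 1 - x) (Set.Icc 0 1) (Set.Icc 0 1) :=
      fun x hx => refl_mem hx
    have hh'c : ContinuousOn h' (Set.Icc 0 1) := by
      apply ContinuousOn.sub continuousOn_const
      exact (hg.comp hrefl hreflm)
    have hh'm : Set.MapsTo h' (Set.Icc 0 1) (Set.Icc 0 1) := by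
      intro x hx
      exact refl_mem (hm (hreflm hx))
    have hiter : ∀ k x, h'^[k] x = 1 - g^[k] (1 - x) := by
      intro k
      induction k with
      | zero => simp
      | succ n ih =>
        intro x
        rw [Function.iterate_succ_apply, Function.iterate_succ_apply, ih]
        congr 1
        simp [hh']
    have hb' : ∀ x ∈ Set.Icc (0:ℝ) 1, ∀ t : Finset ℝ,
        ↑t ⊆ Set.range (fun k : ℕ => h'^[k] x) → t.card ≤ N := by
      intro x hx t ht
      have hinj : Function.Injective (fun u : ℝ => 1 - u) := by
        intro u v huv; simpa using huv
      have := hb (1 - x) (refl_mem hx) (t.image (fun u => 1 - u)) ?_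
      · rwa [Finset.card_image_of_injective _ hinj] at this
      · intro v hv
        simp only [Finset.coe_image, Set.mem_image] at hv
        obtain ⟨u, hu, rfl⟩ := hv
        obtain ⟨k, hk⟩ := ht hu
        refine ⟨k, ?_⟩
        simp only at hk ⊢
        rw [← hk, hiter k x]
        ring
    refine auxA N h' hh'c hh'm hb' (1 - b) (1 - y) (refl_mem hbm) (refl_mem hy)
      (by linarith) ?_ ?_
    · simp only [hh']; rw [sub_sub_cancel, hgb]
    · simp only [hh']; rw [sub_sub_cancel]; linarith
  · exact auxA N g hg hm hb a y ha hy hay hga h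

theorem stmt_4 (f : ℝ → ℝ) (hf : ContinuousOn f (Set.Icc 0 1))
    (hmaps : Set.MapsTo f (Set.Icc 0 1) (Set.Icc 0 1))
    (N : ℕ)
    (hbound : ∀ x ∈ Set.Icc (0:ℝ) 1, ∀ t : Finset ℝ,
      ↑t ⊆ Set.range (fun k : ℕ => f^[k] x) → t.card ≤ N) :
    ∃ a b : ℝ, a ≤ b ∧
      {x | x ∈ Set.Icc (0:ℝ) 1 ∧ f (f x) = x} = Set.Icc a b := by
  set g : ℝ → ℝ := fun x => f (f x) with hg
  have hgf2 : g = f^[2] := by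
    funext x; simp [hg, Function.iterate_succ_apply']
  have hgc : ContinuousOn g (Set.Icc 0 1) := hf.comp hf hmaps
  have hgm : Set.MapsTo g (Set.Icc 0 1) (Set.Icc 0 1) := hmaps.comp hmaps
  have hgb : ∀ x ∈ Set.Icc (0:ℝ) 1, ∀ t : Finset ℝ,
      ↑t ⊆ Set.range (fun k : ℕ => g^[k] x) → t.card ≤ N := by
    intro x hx t ht
    apply hbound x hx t
    intro v hv
    obtain ⟨k, hk⟩ := ht hv
    refine ⟨2 * k, ?_⟩
    simp only at hk ⊢
    rw [Function.iterate_mul, ← hgf2, hk]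
  set S : Set ℝ := {x | x ∈ Set.Icc (0:ℝ) 1 ∧ f (f x) = x} with hS
  -- nonempty: f has a fixed point
  have hSne : S.Nonempty := by
    have h01 : (0:ℝ) ≤ 1 := by norm_num
    have hc : ContinuousOn (fun x => f x - x) (Set.Icc 0 1) := hf.sub continuousOn_id
    have := intermediate_value_Icc' h01 hc
    have h0mem : (0:ℝ) ∈ Set.Icc (f 1 - 1) (f 0 - 0) := by
      constructor
      · linarith [(hmaps (Set.right_mem_Icc.2 h01)).2]
      · simpa using (hmaps (Set.left_mem_Icc.2 h01)).1
    obtain ⟨c, hc1, hc2⟩ := this h0mem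
    have hfc : f c = c := by simp only at hc2; linarith
    exact ⟨c, hc1, by rw [hfc, hfc]⟩
  -- closed
  have hSclosed : IsClosed S := by
    have : S = Set.Icc 0 1 ∩ (fun x => g x - x) ⁻¹' {0} := by
      ext x
      simp only [hS, hg, Set.mem_inter_iff, Set.mem_preimage, Set.mem_singleton_iff,
        sub_eq_zero, Set.mem_setOf_eq]
    rw [this]
    exact ContinuousOn.preimage_isClosed_of_isClosed
      (hgc.sub continuousOn_id) isClosed_Icc isClosed_singleton
  -- convex
  have hconv : ∀ p ∈ S, ∀ q ∈ S, ∀ y, p ≤ y → y ≤ q → y ∈ S := by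
    intro p hp q hq y hpy hyq
    have hymem : y ∈ Set.Icc (0:ℝ) 1 := ⟨le_trans hp.1.1 hpy, le_trans hyq hq.1.2⟩
    refine ⟨hymem, ?_⟩
    by_contra hne
    exact auxB N g hgc hgm hgb p q y hp.1 hq.1 hpy hyq hp.2 hq.2 hne
  -- conclude
  have hSbddA : BddAbove S := ⟨1, fun x hx => hx.1.2⟩
  have hSbddB : BddBelow S := ⟨0, fun x hx => hx.1.1⟩
  refine ⟨sInf S, sSup S, csInf_le_csSup hSne hSbddB hSbddA, ?_⟩
  have hain : sInf S ∈ S := hSclosed.csInf_mem hSne hSbddB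
  have hbin : sSup S ∈ S := hSclosed.csSup_mem hSne hSbddA
  ext z
  constructor
  · intro hz
    exact ⟨csInf_le hSbddB hz, le_csSup hSbddA hz⟩
  · intro hz
    exact hconv _ hain _ hbin z hz.1 hz.2
end

section
/- For every v ∈ (0,1), there exists a unique homeomorphism h : [0,1] → [0,1] satisfying h(f(x)) = f_v(h(x)) for all x ∈ [0,1], where f is the symmetric tent map and f_v the asymmetric tent map with peak at v. Moreover this h is increasing. -/
open Set

noncomputable def tent (x : ℝ) : ℝ := if x ≤ 1/2 then 2*x else 2 - 2*x

noncomputable def tentV (v x : ℝ) : ℝ := if x ≤ v then x / v else (1 - x) / (1 - v)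

namespace St9
abbrev II := ↥(Set.Icc (0:ℝ) 1)
noncomputable def pj (x : ℝ) : II := Set.projIcc 0 1 zero_le_one x

lemma pj_cont : Continuous pj := continuous_projIcc (h := zero_le_one)
lemma pj_mono : Monotone pj := monotone_projIcc zero_le_one
lemma pj_of_mem {x : ℝ} (h : x ∈ Set.Icc (0:ℝ) 1) : pj x = ⟨x, h⟩ := Set.projIcc_of_mem _ h

def I0 : II := ⟨0, by norm_num⟩
def I1 : II := ⟨1, by norm_num⟩

lemma le_I1 (x : II) : x ≤ I1 := Subtype.coe_le_coe.mp x.2.2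
lemma I0_le (x : II) : I0 ≤ x := Subtype.coe_le_coe.mp x.2.1

def SS : Set C(II, ℝ) := {h | h I0 = 0 ∧ h I1 = 1 ∧ Monotone ⇑h}

lemma SS_bounds {h : C(II,ℝ)} (hh : h ∈ SS) (x : II) : 0 ≤ h x ∧ h x ≤ 1 := by
  constructor
  · have := hh.2.2 (I0_le x); rw [hh.1] at this; exact this
  · have := hh.2.2 (le_I1 x); rw [hh.2.1] at this; exact this

noncomputable def Afun (v w : ℝ) (h : II → ℝ) : II → ℝ := fun x =>
  if (x:ℝ) ≤ v then w * h (pj ((x:ℝ) / v)) else 1 - (1 - w) * h (pj ((1 - (x:ℝ)) / (1 - v)))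

variable {v w : ℝ}

lemma Afun_cont (hv : v ∈ Set.Ioo (0:ℝ) 1) {h : C(II,ℝ)} (h1 : h I1 = 1) :
    Continuous (Afun v w ⇑h) := by
  apply Continuous.if_le
  · exact continuous_const.mul (h.continuous.comp (pj_cont.comp
      (continuous_subtype_val.div_const v)))
  · exact continuous_const.sub (continuous_const.mul (h.continuous.comp (pj_cont.comp
      ((continuous_const.sub continuous_subtype_val).div_const (1 - v)))))
  · exact continuous_subtype_val
  · exact continuous_const
  · intro x hx
    have hv0 : v ≠ 0 := ne_of_gt hv.1
    have hv1 : (1:ℝ) - v ≠ 0 := by linarith [hv.2]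
    rw [hx, div_self hv0, div_self hv1]
    have : pj 1 = I1 := pj_of_mem (by norm_num)
    rw [this, h1]; ring

noncomputable def Amap (hv : v ∈ Set.Ioo (0:ℝ) 1) (hw : w ∈ Set.Ioo (0:ℝ) 1) :
    ↥SS → ↥SS := fun h =>
  ⟨⟨Afun v w ⇑h.1, Afun_cont hv h.2.2.1⟩, by
    have hb := SS_bounds h.2
    have hmono := h.2.2.2
    refine ⟨?_, ?_, ?_⟩
    · show Afun v w ⇑h.1 I0 = 0
      have h0v : ((I0:II):ℝ) ≤ v := by simpa [I0] using hv.1.le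
      simp only [Afun, if_pos h0v]
      have : pj (((I0:II):ℝ) / v) = I0 := by
        simp only [I0]; norm_num; exact pj_of_mem (by norm_num)
      rw [this, h.2.1]; ring
    · show Afun v w ⇑h.1 I1 = 1
      have h1v : ¬ ((I1:II):ℝ) ≤ v := by simp [I1]; linarith [hv.2]
      simp only [Afun, if_neg h1v]
      have : pj ((1 - ((I1:II):ℝ)) / (1 - v)) = I0 := by
        simp only [I1, I0]; norm_num; exact pj_of_mem (by norm_num)
      rw [this, h.2.1]; ring
    · intro x y hxy
      have hxy' : (x:ℝ) ≤ (y:ℝ) := hxy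
      show Afun v w ⇑h.1 x ≤ Afun v w ⇑h.1 y
      have h1v : (0:ℝ) < 1 - v := by linarith [hv.2]
      by_cases hx : (x:ℝ) ≤ v <;> by_cases hy : (y:ℝ) ≤ v <;>
        simp only [Afun, hx, hy, if_pos, if_neg, if_true, if_false]
      · exact mul_le_mul_of_nonneg_left
          (hmono (pj_mono ((div_le_div_iff_of_pos_right hv.1).mpr hxy'))) hw.1.le
      · have hL : w * h.1 (pj ((x:ℝ)/v)) ≤ w :=
          (mul_le_iff_le_one_right hw.1).mpr (hb _).2
        have hR : 1 - (1-w) * h.1 (pj ((1-(y:ℝ))/(1-v))) ≥ w := by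
          nlinarith [(hb (pj ((1-(y:ℝ))/(1-v)))).2, hw.2]
        linarith
      · exact absurd (hxy'.trans hy) hx
      · have : (1-(y:ℝ))/(1-v) ≤ (1-(x:ℝ))/(1-v) := by gcongr
        nlinarith [hmono (pj_mono this), hw.2]⟩

noncomputable def cK (w : ℝ) (hw : w ∈ Set.Ioo (0:ℝ) 1) : NNReal :=
  ⟨max w (1-w), le_trans hw.1.le (le_max_left _ _)⟩

lemma AContr (hv : v ∈ Set.Ioo (0:ℝ) 1) (hw : w ∈ Set.Ioo (0:ℝ) 1) :
    ContractingWith (cK w hw) (Amap hv hw) := by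
  constructor
  · rw [← NNReal.coe_lt_coe, NNReal.coe_one]
    show max w (1-w) < (1:ℝ)
    rw [max_lt_iff]; exact ⟨hw.2, by linarith [hw.1]⟩
  · rw [lipschitzWith_iff_dist_le_mul]
    intro h₁ h₂
    rw [Subtype.dist_eq]
    have hc : (0:ℝ) ≤ (cK w hw : ℝ) * dist h₁ h₂ :=
      mul_nonneg (cK w hw).2 dist_nonneg
    rw [ContinuousMap.dist_le hc]
    intro x
    show dist (Afun v w ⇑h₁.1 x) (Afun v w ⇑h₂.1 x) ≤ _
    have key : ∀ z : II, dist (h₁.1 z) (h₂.1 z) ≤ dist h₁.1 h₂.1 :=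
      fun z => ContinuousMap.dist_apply_le_dist z
    have hd : dist h₁ h₂ = dist h₁.1 h₂.1 := Subtype.dist_eq h₁ h₂
    by_cases hx : (x:ℝ) ≤ v <;> simp only [Afun, hx, if_true, if_false, if_pos, if_neg]
    · set z := pj ((x:ℝ)/v)
      calc dist (w * h₁.1 z) (w * h₂.1 z) = w * dist (h₁.1 z) (h₂.1 z) := by
            rw [Real.dist_eq, Real.dist_eq, ← mul_sub, abs_mul, abs_of_nonneg hw.1.le]
        _ ≤ w * dist h₁.1 h₂.1 := mul_le_mul_of_nonneg_left (key z) hw.1.le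
        _ ≤ (cK w hw : ℝ) * dist h₁ h₂ := by
            rw [hd]; exact mul_le_mul_of_nonneg_right (le_max_left _ _) dist_nonneg
    · set z := pj ((1-(x:ℝ))/(1-v))
      calc dist (1 - (1-w) * h₁.1 z) (1 - (1-w) * h₂.1 z)
          = dist ((1-w) * h₁.1 z) ((1-w) * h₂.1 z) := dist_sub_left 1 _ _
        _ = (1-w) * dist (h₁.1 z) (h₂.1 z) := by
            rw [Real.dist_eq, Real.dist_eq, ← mul_sub, abs_mul,
              abs_of_nonneg (show (0:ℝ) ≤ 1-w by linarith [hw.2])]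
        _ ≤ (1-w) * dist h₁.1 h₂.1 :=
            mul_le_mul_of_nonneg_left (key z) (by linarith [hw.2])
        _ ≤ (cK w hw : ℝ) * dist h₁ h₂ := by
            rw [hd]; exact mul_le_mul_of_nonneg_right (le_max_right _ _) dist_nonneg

lemma SS_closed : IsClosed SS := by
  have h1 : IsClosed {h : C(II,ℝ) | h I0 = 0} :=
    isClosed_eq (continuous_eval_const I0) continuous_const
  have h2 : IsClosed {h : C(II,ℝ) | h I1 = 1} :=
    isClosed_eq (continuous_eval_const I1) continuous_const
  have h3 : IsClosed {h : C(II,ℝ) | Monotone ⇑h} := by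
    have : {h : C(II,ℝ) | Monotone ⇑h} =
        ⋂ (p : II × II), ⋂ (_ : p.1 ≤ p.2), {h : C(II,ℝ) | h p.1 ≤ h p.2} := by
      ext h
      simp only [Set.mem_setOf_eq, Set.mem_iInter, Monotone, Prod.forall]
    rw [this]
    exact isClosed_iInter fun p => isClosed_iInter fun _ =>
      isClosed_le (continuous_eval_const p.1) (continuous_eval_const p.2)
  exact h1.inter (h2.inter h3)

noncomputable def idm : C(II,ℝ) := ⟨Subtype.val, continuous_subtype_val⟩

lemma idm_mem : idm ∈ SS :=
  ⟨rfl, rfl, fun _ _ h => h⟩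

instance : CompleteSpace ↥SS := SS_closed.completeSpace_coe
instance : Nonempty ↥SS := ⟨⟨idm, idm_mem⟩⟩

noncomputable def fixA (hv : v ∈ Set.Ioo (0:ℝ) 1) (hw : w ∈ Set.Ioo (0:ℝ) 1) : ↥SS :=
  ContractingWith.fixedPoint (Amap hv hw) (AContr hv hw)

lemma fixA_eq (hv : v ∈ Set.Ioo (0:ℝ) 1) (hw : w ∈ Set.Ioo (0:ℝ) 1) :
    Amap hv hw (fixA hv hw) = fixA hv hw := (AContr hv hw).fixedPoint_isFixedPt

lemma fix_unique (hv : v ∈ Set.Ioo (0:ℝ) 1) (hw : w ∈ Set.Ioo (0:ℝ) 1) {h : ↥SS}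
    (hf : Amap hv hw h = h) : h = fixA hv hw := (AContr hv hw).fixedPoint_unique hf

lemma fix_left (hv : v ∈ Set.Ioo (0:ℝ) 1) (hw : w ∈ Set.Ioo (0:ℝ) 1) {hfix : ↥SS}
    (hEq : Amap hv hw hfix = hfix) {x : II} (hx : (x:ℝ) ≤ v) :
    hfix.1 x = w * hfix.1 (pj ((x:ℝ)/v)) := by
  have h1 : Afun v w ⇑hfix.1 x = hfix.1 x :=
    ContinuousMap.congr_fun (congrArg Subtype.val hEq) x
  rw [← h1]; simp only [Afun, if_pos hx]

lemma fix_right (hv : v ∈ Set.Ioo (0:ℝ) 1) (hw : w ∈ Set.Ioo (0:ℝ) 1) {hfix : ↥SS}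
    (hEq : Amap hv hw hfix = hfix) {x : II} (hx : v ≤ (x:ℝ)) :
    hfix.1 x = 1 - (1-w) * hfix.1 (pj ((1-(x:ℝ))/(1-v))) := by
  have hv0 : v ≠ 0 := ne_of_gt hv.1
  have hv1 : (1:ℝ) - v ≠ 0 := by intro h0; linarith [hv.2]
  by_cases h : (x:ℝ) ≤ v
  · have hxv : (x:ℝ) = v := le_antisymm h hx
    rw [fix_left hv hw hEq h, hxv, div_self hv0, div_self hv1,
      pj_of_mem (show (1:ℝ) ∈ Set.Icc (0:ℝ) 1 by norm_num)]
    have : hfix.1 I1 = 1 := hfix.2.2.1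
    rw [show (⟨1, by norm_num⟩ : II) = I1 from rfl, this]; ring
  · have h1 : Afun v w ⇑hfix.1 x = hfix.1 x :=
      ContinuousMap.congr_fun (congrArg Subtype.val hEq) x
    rw [← h1]; simp only [Afun, if_neg h]

lemma id_fix {u : ℝ} (hu : u ∈ Set.Ioo (0:ℝ) 1) :
    Amap hu hu ⟨idm, idm_mem⟩ = ⟨idm, idm_mem⟩ := by
  apply Subtype.ext
  apply ContinuousMap.ext
  intro x
  show Afun u u (Subtype.val) x = (x:ℝ)
  have hu1 : (0:ℝ) < 1 - u := by linarith [hu.2]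
  by_cases hx : (x:ℝ) ≤ u
  · have hm : (x:ℝ)/u ∈ Set.Icc (0:ℝ) 1 := by
      constructor
      · exact div_nonneg x.2.1 hu.1.le
      · rw [div_le_one hu.1]; exact hx
    simp only [Afun, if_pos hx, pj_of_mem hm]
    rw [show u * ((x:ℝ)/u) = u/u * (x:ℝ) by ring, div_self (ne_of_gt hu.1), one_mul]
  · have hx' : u ≤ (x:ℝ) := le_of_not_ge hx
    have hm : (1-(x:ℝ))/(1-u) ∈ Set.Icc (0:ℝ) 1 := by
      constructor
      · apply div_nonneg (by linarith [x.2.2]) hu1.le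
      · rw [div_le_one hu1]; linarith
    simp only [Afun, if_neg hx, pj_of_mem hm]
    field_simp
    ring

lemma comp_fix {a b c : ℝ} (ha : a ∈ Set.Ioo (0:ℝ) 1) (hb : b ∈ Set.Ioo (0:ℝ) 1)
    (hc : c ∈ Set.Ioo (0:ℝ) 1) {h₁ h₂ : ↥SS}
    (e₁ : Amap ha hb h₁ = h₁) (e₂ : Amap hb hc h₂ = h₂) :
    ∃ g : ↥SS, Amap ha hc g = g ∧ ∀ x : II, g.1 x = h₂.1 (pj (h₁.1 x)) := by
  have hb1 : (0:ℝ) < 1 - b := by linarith [hb.2]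
  set gf : C(II,ℝ) := ⟨fun x => h₂.1 (pj (h₁.1 x)),
    h₂.1.continuous.comp (pj_cont.comp h₁.1.continuous)⟩ with hgf
  have hb₁ := SS_bounds h₁.2
  have hb₂ := SS_bounds h₂.2
  have hmem : gf ∈ SS := by
    refine ⟨?_, ?_, ?_⟩
    · show h₂.1 (pj (h₁.1 I0)) = 0
      rw [h₁.2.1, show pj 0 = I0 from pj_of_mem (by norm_num), h₂.2.1]
    · show h₂.1 (pj (h₁.1 I1)) = 1
      rw [h₁.2.2.1, show pj 1 = I1 from pj_of_mem (by norm_num), h₂.2.2.1]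
    · intro x y hxy
      exact h₂.2.2.2 (pj_mono (h₁.2.2.2 hxy))
  refine ⟨⟨gf, hmem⟩, ?_, fun x => rfl⟩
  apply Subtype.ext
  apply ContinuousMap.ext
  intro x
  show Afun a c ⇑gf x = gf x
  by_cases hx : (x:ℝ) ≤ a
  · -- h₁ x = b * h₁ (pj (x/a)), and that value is ≤ b
    have e1x := fix_left ha hb e₁ hx
    have hy : h₁.1 x ∈ Set.Icc (0:ℝ) 1 := ⟨(hb₁ x).1, (hb₁ x).2⟩
    have hyb : h₁.1 x ≤ b := by
      rw [e1x]
      nlinarith [(hb₁ (pj ((x:ℝ)/a))).2, hb.1]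
    -- g x = h₂ (pj (h₁ x)); apply fix_left of h₂ at point pj (h₁ x)
    have hpj : pj (h₁.1 x) = ⟨h₁.1 x, hy⟩ := pj_of_mem hy
    have e2x := fix_left hb hc e₂ (x := ⟨h₁.1 x, hy⟩) hyb
    have harg : (h₁.1 x) / b = h₁.1 (pj ((x:ℝ)/a)) := by
      rw [e1x]; exact mul_div_cancel_left₀ _ (ne_of_gt hb.1)
    simp only [Afun, if_pos hx]
    show c * gf (pj ((x:ℝ)/a)) = gf x
    show c * h₂.1 (pj (h₁.1 (pj ((x:ℝ)/a)))) = h₂.1 (pj (h₁.1 x))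
    rw [hpj, e2x, harg]
  · have hx' : a ≤ (x:ℝ) := le_of_not_ge hx
    have e1x := fix_right ha hb e₁ hx'
    have hy : h₁.1 x ∈ Set.Icc (0:ℝ) 1 := ⟨(hb₁ x).1, (hb₁ x).2⟩
    have hyb : b ≤ h₁.1 x := by
      rw [e1x]
      nlinarith [(hb₁ (pj ((1-(x:ℝ))/(1-a)))).2, hb.2]
    have hpj : pj (h₁.1 x) = ⟨h₁.1 x, hy⟩ := pj_of_mem hy
    have e2x := fix_right hb hc e₂ (x := ⟨h₁.1 x, hy⟩) hyb
    have harg : (1 - h₁.1 x) / (1-b) = h₁.1 (pj ((1-(x:ℝ))/(1-a))) := by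
      rw [e1x]; field_simp; ring
    simp only [Afun, if_neg hx]
    show 1 - (1-c) * gf (pj ((1-(x:ℝ))/(1-a))) = gf x
    show 1 - (1-c) * h₂.1 (pj (h₁.1 (pj ((1-(x:ℝ))/(1-a))))) = h₂.1 (pj (h₁.1 x))
    rw [hpj, e2x, harg]

lemma tent_eq : tent = tentV (1/2) := by
  funext x
  simp only [tent, tentV]
  split_ifs with h <;> ring

lemma tentV_of_ge {u y : ℝ} (hu : u ∈ Set.Ioo (0:ℝ) 1) (h : u ≤ y) :
    tentV u y = (1-y)/(1-u) := by
  have hu1 : (1:ℝ) - u ≠ 0 := by intro h0; linarith [hu.2]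
  simp only [tentV]
  split_ifs with h'
  · have : y = u := le_antisymm h' h
    subst this
    rw [div_self (ne_of_gt hu.1), div_self hu1]
  · rfl

lemma tentV_eq_one {u y : ℝ} (hu : u ∈ Set.Ioo (0:ℝ) 1) (h : tentV u y = 1) : y = u := by
  simp only [tentV] at h
  split_ifs at h with h'
  · rw [div_eq_one_iff_eq (ne_of_gt hu.1)] at h; linarith
  · have hu1 : (1:ℝ) - u ≠ 0 := by intro h0; linarith [hu.2]
    field_simp at h
    linarith

lemma fix_conj (hv' : v ∈ Set.Ioo (0:ℝ) 1) (hw' : w ∈ Set.Ioo (0:ℝ) 1) {hfix : ↥SS}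
    (hEq : Amap hv' hw' hfix = hfix) {x : ℝ} (hx : x ∈ Set.Icc (0:ℝ) 1) :
    hfix.1 (pj (tentV v x)) = tentV w (hfix.1 (pj x)) := by
  have hb := SS_bounds hfix.2
  have hw1 : (1:ℝ) - w ≠ 0 := by intro h0; linarith [hw'.2]
  rw [pj_of_mem hx]
  by_cases hxv : x ≤ v
  · have e := fix_left hv' hw' hEq (x := ⟨x, hx⟩) hxv
    have hle : hfix.1 ⟨x, hx⟩ ≤ w := by
      rw [e]; nlinarith [(hb (pj (x/v))).2, hw'.1]
    rw [show tentV v x = x / v from if_pos hxv,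
        show tentV w (hfix.1 ⟨x, hx⟩) = hfix.1 ⟨x, hx⟩ / w from if_pos hle, e,
        mul_div_cancel_left₀ _ (ne_of_gt hw'.1)]
  · have hxv' : v ≤ x := le_of_not_ge hxv
    have e := fix_right hv' hw' hEq (x := ⟨x, hx⟩) hxv'
    have hge : w ≤ hfix.1 ⟨x, hx⟩ := by
      rw [e]; nlinarith [(hb (pj ((1-x)/(1-v)))).2, hw'.2]
    rw [show tentV v x = (1-x)/(1-v) from if_neg hxv, tentV_of_ge hw' hge, e]
    field_simp
    ring

end St9

open St9 in
theorem stmt_9 (v : ℝ) (hv : v ∈ Set.Ioo (0:ℝ) 1) :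
    ∃ h : ℝ → ℝ,
      (ContinuousOn h (Set.Icc 0 1) ∧ Set.BijOn h (Set.Icc 0 1) (Set.Icc 0 1) ∧
        (∀ x ∈ Set.Icc (0:ℝ) 1, h (tent x) = tentV v (h x)) ∧
        StrictMonoOn h (Set.Icc 0 1)) ∧
      ∀ h' : ℝ → ℝ,
        ContinuousOn h' (Set.Icc 0 1) → Set.BijOn h' (Set.Icc 0 1) (Set.Icc 0 1) →
        (∀ x ∈ Set.Icc (0:ℝ) 1, h' (tent x) = tentV v (h' x)) →
        Set.EqOn h h' (Set.Icc 0 1) := by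
  have hhalf : (1/2:ℝ) ∈ Set.Ioo (0:ℝ) 1 := by norm_num
  have hv1 : (1:ℝ) - v ≠ 0 := by intro h0; linarith [hv.2]
  set H : ↥SS := fixA hhalf hv with hH
  set K : ↥SS := fixA hv hhalf with hK
  have eH : Amap hhalf hv H = H := fixA_eq hhalf hv
  have eK : Amap hv hhalf K = K := fixA_eq hv hhalf
  have hbH := SS_bounds H.2
  -- K ∘ H = id
  have hKH : ∀ x : II, K.1 (pj (H.1 x)) = (x:ℝ) := by
    obtain ⟨g, eg, hg⟩ := comp_fix hhalf hv hhalf eH eK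
    have hgid : g = (⟨idm, idm_mem⟩ : ↥SS) :=
      (fix_unique hhalf hhalf eg).trans (fix_unique hhalf hhalf (id_fix hhalf)).symm
    intro x
    have := hg x
    rw [hgid] at this
    exact this.symm
  set h : ℝ → ℝ := fun x => H.1 (pj x) with hdef
  have hcont : Continuous h := H.1.continuous.comp pj_cont
  have hpj0 : pj (0:ℝ) = I0 := pj_of_mem (by norm_num)
  have hpj1 : pj (1:ℝ) = I1 := pj_of_mem (by norm_num)
  have h0 : h 0 = 0 := by rw [hdef]; simp only [hpj0]; exact H.2.1
  have h1 : h 1 = 1 := by rw [hdef]; simp only [hpj1]; exact H.2.2.1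
  have hmaps : Set.MapsTo h (Set.Icc 0 1) (Set.Icc 0 1) := by
    intro x hx; exact ⟨(hbH (pj x)).1, (hbH (pj x)).2⟩
  have hmem : ∀ {x : ℝ} (hx : x ∈ Set.Icc (0:ℝ) 1), h x = H.1 ⟨x, hx⟩ := by
    intro x hx; rw [hdef]; simp only [pj_of_mem hx]
  have hinj : Set.InjOn h (Set.Icc 0 1) := by
    intro x hx y hy hxy
    have ex := hKH ⟨x, hx⟩
    have ey := hKH ⟨y, hy⟩
    rw [hmem hx, hmem hy] at hxy
    rw [hxy] at ex
    exact ex.symm.trans ey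
  have hmono : MonotoneOn h (Set.Icc 0 1) := by
    intro x hx y hy hxy
    exact H.2.2.2 (pj_mono hxy)
  have hsm : StrictMonoOn h (Set.Icc 0 1) := by
    intro x hx y hy hxy
    rcases lt_or_eq_of_le (hmono hx hy hxy.le) with h' | h'
    · exact h'
    · exact absurd (hinj hx hy h') (ne_of_lt hxy)
  have hsurj : Set.SurjOn h (Set.Icc 0 1) (Set.Icc 0 1) := by
    have := intermediate_value_Icc (zero_le_one) hcont.continuousOn
    rw [h0, h1] at this
    exact this
  have hconj : ∀ x ∈ Set.Icc (0:ℝ) 1, h (tent x) = tentV v (h x) := by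
    intro x hx
    rw [tent_eq]
    exact fix_conj hhalf hv eH hx
  refine ⟨h, ⟨hcont.continuousOn, ⟨hmaps, hinj, hsurj⟩, hconj, hsm⟩, ?_⟩
  -- uniqueness
  intro h' cont' bij' conj'
  have mem0 : (0:ℝ) ∈ Set.Icc (0:ℝ) 1 := by norm_num
  have mem1 : (1:ℝ) ∈ Set.Icc (0:ℝ) 1 := by norm_num
  have memh : (1/2:ℝ) ∈ Set.Icc (0:ℝ) 1 := by norm_num
  have e0 : h' 0 = tentV v (h' 0) := by
    have := conj' 0 mem0
    rw [show tent 0 = 0 by norm_num [tent]] at this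
    exact this
  have tentV1 : tentV v 1 = 0 := by
    simp only [tentV, if_neg (show ¬ (1:ℝ) ≤ v by push_neg; exact hv.2)]
    simp
  -- h' is strictly monotone
  rcases ContinuousOn.strictMonoOn_of_injOn_Icc' zero_le_one cont' bij'.2.1 with hsm' | hanti
  · -- monotone case
    have h'0 : h' 0 = 0 := by
      obtain ⟨b, hb, hfb⟩ := bij'.2.2 (Set.left_mem_Icc.mpr zero_le_one)
      have : h' 0 ≤ h' b := by
        rcases eq_or_lt_of_le hb.1 with hb' | hb'
        · rw [← hb']
        · exact (hsm' mem0 hb hb').le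
      rw [hfb] at this
      exact le_antisymm this (bij'.1 mem0).1
    have h'1 : h' 1 = 1 := by
      obtain ⟨a, ha, hfa⟩ := bij'.2.2 (Set.right_mem_Icc.mpr zero_le_one)
      have : h' a ≤ h' 1 := by
        rcases eq_or_lt_of_le ha.2 with ha' | ha'
        · rw [ha']
        · exact (hsm' ha mem1 ha').le
      rw [hfa] at this
      exact le_antisymm (bij'.1 mem1).2 this
    have h'half : h' (1/2) = v := by
      apply tentV_eq_one hv
      have := conj' (1/2) memh
      rw [show tent (1/2 : ℝ) = 1 by norm_num [tent], h'1] at this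
      exact this.symm
    have hmono' : MonotoneOn h' (Set.Icc 0 1) := by
      intro x hx y hy hxy
      rcases eq_or_lt_of_le hxy with rfl | hlt
      · exact le_refl _
      · exact (hsm' hx hy hlt).le
    -- restriction is a fixed point of Amap hhalf hv
    set h'r : C(II, ℝ) := ⟨fun x : II => h' x, cont'.restrict⟩ with hh'r
    have memS : h'r ∈ SS := by
      refine ⟨h'0, h'1, ?_⟩
      intro x y hxy
      exact hmono' x.2 y.2 hxy
    have hfix' : Amap hhalf hv ⟨h'r, memS⟩ = ⟨h'r, memS⟩ := by
      apply Subtype.ext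
      apply ContinuousMap.ext
      intro x
      show Afun (1/2) v (fun x : II => h' x) x = h' x
      by_cases hx : (x:ℝ) ≤ 1/2
      · have harg : (x:ℝ)/(1/2) ∈ Set.Icc (0:ℝ) 1 := by
          constructor
          · exact div_nonneg x.2.1 (by norm_num)
          · rw [div_le_one (by norm_num : (0:ℝ) < 1/2)]; linarith
        have htent : tent (x:ℝ) = (x:ℝ)/(1/2) := by
          rw [tent, if_pos hx]; ring
        have hle : h' x ≤ v := by
          rw [← h'half]
          exact hmono' x.2 memh hx
        have := conj' x x.2
        rw [htent, show tentV v (h' (x:ℝ)) = h' (x:ℝ) / v from if_pos hle] at this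
        simp only [Afun, if_pos hx, pj_of_mem harg]
        rw [this]
        field_simp
        exact mul_div_cancel_left₀ _ (ne_of_gt hv.1)
      · have hx' : (1/2:ℝ) ≤ (x:ℝ) := le_of_not_ge hx
        have harg : (1-(x:ℝ))/(1-1/2) ∈ Set.Icc (0:ℝ) 1 := by
          constructor
          · exact div_nonneg (by linarith [x.2.2]) (by norm_num)
          · rw [div_le_one (by norm_num : (0:ℝ) < 1-1/2)]; linarith
        have htent : tent (x:ℝ) = (1-(x:ℝ))/(1-1/2) := by
          rw [tent, if_neg hx]; ring
        have hge : v ≤ h' x := by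
          rw [← h'half]
          exact hmono' memh x.2 hx'
        have := conj' x x.2
        rw [htent, tentV_of_ge hv hge] at this
        simp only [Afun, if_neg hx, pj_of_mem harg]
        rw [this]
        field_simp
        ring
    have : (⟨h'r, memS⟩ : ↥SS) = H := fix_unique hhalf hv hfix'
    intro x hx
    have := congrArg Subtype.val this
    have := ContinuousMap.congr_fun this ⟨x, hx⟩
    rw [hmem hx]
    exact this.symm ▸ rfl
  · -- antitone case: contradiction
    exfalso
    have h'0 : h' 0 = 1 := by
      obtain ⟨a, ha, hfa⟩ := bij'.2.2 (Set.right_mem_Icc.mpr zero_le_one)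
      have : h' a ≤ h' 0 := by
        rcases eq_or_lt_of_le ha.1 with ha' | ha'
        · rw [← ha']
        · exact (hanti mem0 ha ha').le
      rw [hfa] at this
      exact le_antisymm (bij'.1 mem0).2 this
    rw [h'0, tentV1] at e0
    norm_num at e0
end

section
/- Let B_n be the set of solutions of f_v^n(x) = 0 in [0,1], where f_v is the asymmetric tent map with peak v ∈ (0,1). Then the set B = ⋃_{n≥1} B_n is dense in [0,1]. Moreover, if d_n denotes the maximal gap between consecutive points of B_n, then d_{n+1} ≤ max(v, 1-v) · d_n. -/
def tentB (v : ℝ) (n : ℕ) : Set ℝ :=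
  {x | x ∈ Set.Icc (0:ℝ) 1 ∧ (tentV v)^[n] x = 0}

noncomputable def maxGap (v : ℝ) (n : ℕ) : ℝ :=
  sSup {d : ℝ | ∃ x ∈ tentB v n, ∃ y ∈ tentB v n,
    x < y ∧ (∀ z ∈ tentB v n, z ∉ Set.Ioo x y) ∧ d = y - x}

def gapSet (v : ℝ) (n : ℕ) : Set ℝ :=
  {d : ℝ | ∃ x ∈ tentB v n, ∃ y ∈ tentB v n,
    x < y ∧ (∀ z ∈ tentB v n, z ∉ Set.Ioo x y) ∧ d = y - x}

lemma maxGap_eq (v : ℝ) (n : ℕ) : maxGap v n = sSup (gapSet v n) := rfl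

lemma tent_maps {v : ℝ} (hv0 : 0 < v) (hv1 : v < 1) {x : ℝ}
    (hx : x ∈ Set.Icc (0:ℝ) 1) : tentV v x ∈ Set.Icc (0:ℝ) 1 := by
  obtain ⟨h0, h1⟩ := hx
  unfold tentV
  split_ifs with h
  · exact ⟨by positivity, by rw [div_le_one hv0]; exact h⟩
  · push_neg at h
    exact ⟨div_nonneg (by linarith) (by linarith),
      by rw [div_le_one (by linarith)]; linarith⟩

lemma memB_succ {v : ℝ} (hv0 : 0 < v) (hv1 : v < 1) {n : ℕ} {x : ℝ} :
    x ∈ tentB v (n+1) ↔ x ∈ Set.Icc (0:ℝ) 1 ∧ tentV v x ∈ tentB v n := by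
  simp only [tentB, Set.mem_setOf_eq, Function.iterate_succ_apply]
  constructor
  · rintro ⟨hx, h⟩; exact ⟨hx, tent_maps hv0 hv1 hx, h⟩
  · rintro ⟨hx, _, h⟩; exact ⟨hx, h⟩

lemma tent_eq_iff {v : ℝ} (hv0 : 0 < v) (hv1 : v < 1) {x t : ℝ}
    (hx : x ∈ Set.Icc (0:ℝ) 1) (ht : t ∈ Set.Icc (0:ℝ) 1) :
    tentV v x = t ↔ x = v * t ∨ x = 1 - (1 - v) * t := by
  obtain ⟨hx0, hx1⟩ := hx
  obtain ⟨ht0, ht1⟩ := ht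
  have h1v : (0:ℝ) < 1 - v := by linarith
  unfold tentV
  constructor
  · intro h
    split_ifs at h with hc
    · left
      field_simp at h
      linarith
    · right
      push_neg at hc
      field_simp at h
      linarith
  · rintro (rfl | rfl)
    · rw [if_pos (by nlinarith)]
      field_simp
    · have hge : v ≤ 1 - (1 - v) * t := by nlinarith
      by_cases hc : 1 - (1 - v) * t ≤ v
      · have heq : 1 - (1 - v) * t = v := le_antisymm hc hge
        have ht1' : t = 1 := by nlinarith
        rw [if_pos hc, heq, ht1', div_self (ne_of_gt hv0)]
      · rw [if_neg hc]
        field_simp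
        ring
  
lemma tentB_succ {v : ℝ} (hv0 : 0 < v) (hv1 : v < 1) (n : ℕ) :
    tentB v (n+1) =
      (fun t => v * t) '' tentB v n ∪ (fun t => 1 - (1 - v) * t) '' tentB v n := by
  ext x
  rw [memB_succ hv0 hv1]
  constructor
  · rintro ⟨hx, ht⟩
    rcases (tent_eq_iff hv0 hv1 hx ht.1).mp rfl with h | h
    · left; exact ⟨tentV v x, ht, h.symm⟩
    · right; exact ⟨tentV v x, ht, h.symm⟩
  · rintro (⟨t, htB, rfl⟩ | ⟨t, htB, rfl⟩)
    · obtain ⟨ht0, ht1⟩ := htB.1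
      have hx : v * t ∈ Set.Icc (0:ℝ) 1 := ⟨by nlinarith, by nlinarith⟩
      refine ⟨hx, ?_⟩
      have h := (tent_eq_iff hv0 hv1 hx ⟨ht0, ht1⟩).mpr (Or.inl rfl)
      rwa [h]
    · obtain ⟨ht0, ht1⟩ := htB.1
      have hx : 1 - (1 - v) * t ∈ Set.Icc (0:ℝ) 1 := ⟨by nlinarith, by nlinarith⟩
      refine ⟨hx, ?_⟩
      have h := (tent_eq_iff hv0 hv1 hx ⟨ht0, ht1⟩).mpr (Or.inr rfl)
      rwa [h]

lemma tent_zero {v : ℝ} (hv0 : 0 < v) : tentV v 0 = 0 := by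
  unfold tentV
  rw [if_pos hv0.le, zero_div]

lemma zero_memB {v : ℝ} (hv0 : 0 < v) (n : ℕ) : 0 ∈ tentB v n :=
  ⟨⟨le_refl 0, zero_le_one⟩, by rw [Function.iterate_fixed (tent_zero hv0)]⟩

lemma one_memB {v : ℝ} (hv0 : 0 < v) (hv1 : v < 1) {n : ℕ} (hn : 1 ≤ n) :
    1 ∈ tentB v n := by
  obtain ⟨m, rfl⟩ : ∃ m, n = m + 1 := ⟨n - 1, by omega⟩
  refine ⟨⟨zero_le_one, le_refl 1⟩, ?_⟩
  rw [Function.iterate_succ_apply]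
  have h1 : tentV v 1 = 0 := by
    unfold tentV
    rw [if_neg (by linarith), sub_self, zero_div]
  rw [h1, Function.iterate_fixed (tent_zero hv0)]

lemma finB {v : ℝ} (hv0 : 0 < v) (hv1 : v < 1) : ∀ n, (tentB v n).Finite := by
  intro n
  induction n with
  | zero =>
    apply Set.Finite.subset (Set.finite_singleton (0:ℝ))
    rintro x ⟨_, hx⟩
    simpa using hx
  | succ n ih =>
    rw [tentB_succ hv0 hv1]
    exact (ih.image _).union (ih.image _)

lemma approx {v : ℝ} (hv0 : 0 < v) (hv1 : v < 1) :
    ∀ n, ∀ x ∈ Set.Icc (0:ℝ) 1, ∃ y ∈ tentB v (n+1),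
      |x - y| ≤ (max v (1-v)) ^ n := by
  intro n
  induction n with
  | zero =>
    intro x hx
    exact ⟨0, zero_memB hv0 1, by
      rw [pow_zero, sub_zero, abs_of_nonneg hx.1]; exact hx.2⟩
  | succ n ih =>
    intro x hx
    obtain ⟨hx0, hx1⟩ := hx
    have h1v : (0:ℝ) < 1 - v := by linarith
    by_cases hc : x ≤ v
    · have ht : x / v ∈ Set.Icc (0:ℝ) 1 :=
        ⟨div_nonneg hx0 hv0.le, (div_le_one hv0).2 hc⟩
      obtain ⟨y', hy', hle⟩ := ih (x / v) ht
      refine ⟨v * y', ?_, ?_⟩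
      · rw [tentB_succ hv0 hv1]; left; exact ⟨y', hy', rfl⟩
      · have he : x - v * y' = v * (x / v - y') := by field_simp
        rw [he, abs_mul, abs_of_nonneg hv0.le, pow_succ']
        exact mul_le_mul (le_max_left _ _) hle (abs_nonneg _)
          (le_trans hv0.le (le_max_left _ _))
    · push_neg at hc
      have ht : (1 - x) / (1 - v) ∈ Set.Icc (0:ℝ) 1 :=
        ⟨div_nonneg (by linarith) h1v.le, (div_le_one h1v).2 (by linarith)⟩
      obtain ⟨y', hy', hle⟩ := ih ((1 - x) / (1 - v)) ht
      refine ⟨1 - (1 - v) * y', ?_, ?_⟩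
      · rw [tentB_succ hv0 hv1]; right; exact ⟨y', hy', rfl⟩
      · have he : x - (1 - (1 - v) * y') = (1 - v) * (y' - (1 - x) / (1 - v)) := by
          field_simp; ring
        rw [he, abs_mul, abs_of_nonneg h1v.le, abs_sub_comm, pow_succ']
        exact mul_le_mul (le_max_right _ _) hle (abs_nonneg _)
          (le_trans hv0.le (le_max_left _ _))

lemma gap_bddAbove (v : ℝ) (n : ℕ) : BddAbove (gapSet v n) := by
  refine ⟨1, fun d hd => ?_⟩
  obtain ⟨x, hx, y, hy, _, _, rfl⟩ := hd
  have h1 := hx.1.1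
  have h2 := hy.1.2
  linarith

lemma gap_exists_pos {v : ℝ} (hv0 : 0 < v) (hv1 : v < 1) {n : ℕ} (hn : 1 ≤ n) :
    ∃ d ∈ gapSet v n, 0 < d := by
  set S : Set ℝ := {z ∈ tentB v n | 0 < z} with hS
  have hfin : S.Finite := (finB hv0 hv1 n).subset (Set.sep_subset _ _)
  have hne : S.Nonempty := ⟨1, one_memB hv0 hv1 hn, one_pos⟩
  obtain ⟨y, hyS, hymin⟩ := Set.exists_min_image S id hfin hne
  refine ⟨y - 0, ⟨0, zero_memB hv0 n, y, hyS.1, hyS.2, ?_, rfl⟩, by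
    simpa using hyS.2⟩
  intro z hz hzo
  exact absurd (hymin z ⟨hz, hzo.1⟩) (not_le.2 hzo.2)

lemma maxGap_nonneg {v : ℝ} (hv0 : 0 < v) (hv1 : v < 1) {n : ℕ} (hn : 1 ≤ n) :
    0 ≤ maxGap v n := by
  obtain ⟨d, hd, hdpos⟩ := gap_exists_pos hv0 hv1 hn
  rw [maxGap_eq]
  exact le_trans hdpos.le (le_csSup (gap_bddAbove v n) hd)

lemma gap_le {v : ℝ} (hv0 : 0 < v) (hv1 : v < 1) {n : ℕ} (hn : 1 ≤ n) {d : ℝ}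
    (hd : d ∈ gapSet v (n+1)) : d ≤ max v (1 - v) * maxGap v n := by
  have h1v : (0:ℝ) < 1 - v := by linarith
  obtain ⟨x, hx, y, hy, hxy, hgap, rfl⟩ := hd
  have hvmem : v ∈ tentB v (n+1) := by
    rw [tentB_succ hv0 hv1]; left; exact ⟨1, one_memB hv0 hv1 hn, mul_one v⟩
  have hvout := hgap v hvmem
  have hcase : y ≤ v ∨ v ≤ x := by
    by_contra h
    push_neg at h
    exact hvout ⟨h.2, h.1⟩
  rw [tentB_succ hv0 hv1] at hx hy
  rcases hcase with hyv | hvx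
  · -- left branch: x = v*a, y = v*b
    have hxv : x < v := lt_of_lt_of_le hxy hyv
    obtain ⟨a, ha, hxa⟩ : ∃ a ∈ tentB v n, v * a = x := by
      rcases hx with ⟨a, ha, hxa⟩ | ⟨a, ha, hxa⟩
      · exact ⟨a, ha, hxa⟩
      · have hxa : 1 - (1 - v) * a = x := hxa
        have ha1 := ha.1.2
        nlinarith
    obtain ⟨b, hb, hyb⟩ : ∃ b ∈ tentB v n, v * b = y := by
      rcases hy with ⟨b, hb, hyb⟩ | ⟨b, hb, hyb⟩
      · exact ⟨b, hb, hyb⟩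
      · have hyb : 1 - (1 - v) * b = y := hyb
        have hb1 := hb.1.2
        have hbeq : b = 1 := by nlinarith
        exact ⟨1, one_memB hv0 hv1 hn, by nlinarith⟩
    have hab : a < b := by nlinarith
    have hgap' : ∀ z ∈ tentB v n, z ∉ Set.Ioo a b := by
      intro z hz hzab
      refine hgap (v * z) ?_ ⟨by nlinarith [hzab.1], by nlinarith [hzab.2]⟩
      rw [tentB_succ hv0 hv1]; left; exact ⟨z, hz, rfl⟩
    have h1 : b - a ≤ maxGap v n := by
      rw [maxGap_eq]
      exact le_csSup (gap_bddAbove v n) ⟨a, ha, b, hb, hab, hgap', rfl⟩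
    have h2 : y - x = v * (b - a) := by rw [← hxa, ← hyb]; ring
    rw [h2]
    calc v * (b - a) ≤ v * maxGap v n :=
          mul_le_mul_of_nonneg_left h1 hv0.le
      _ ≤ max v (1 - v) * maxGap v n :=
          mul_le_mul_of_nonneg_right (le_max_left _ _)
            (maxGap_nonneg hv0 hv1 hn)
  · -- right branch: x = 1-(1-v)a, y = 1-(1-v)b
    have hvy : v < y := lt_of_le_of_lt hvx hxy
    obtain ⟨b, hb, hyb⟩ : ∃ b ∈ tentB v n, 1 - (1 - v) * b = y := by
      rcases hy with ⟨b, hb, hyb⟩ | ⟨b, hb, hyb⟩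
      · have hyb : v * b = y := hyb
        have hb1 := hb.1.2
        nlinarith
      · exact ⟨b, hb, hyb⟩
    obtain ⟨a, ha, hxa⟩ : ∃ a ∈ tentB v n, 1 - (1 - v) * a = x := by
      rcases hx with ⟨a, ha, hxa⟩ | ⟨a, ha, hxa⟩
      · have hxa : v * a = x := hxa
        have ha1 := ha.1.2
        have hxeq : x = v := by nlinarith
        exact ⟨1, one_memB hv0 hv1 hn, by nlinarith⟩
      · exact ⟨a, ha, hxa⟩
    have hba : b < a := by nlinarith
    have hgap' : ∀ z ∈ tentB v n, z ∉ Set.Ioo b a := by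
      intro z hz hzab
      refine hgap (1 - (1 - v) * z) ?_
        ⟨by nlinarith [hzab.2], by nlinarith [hzab.1]⟩
      rw [tentB_succ hv0 hv1]; right; exact ⟨z, hz, rfl⟩
    have h1 : a - b ≤ maxGap v n := by
      rw [maxGap_eq]
      exact le_csSup (gap_bddAbove v n) ⟨b, hb, a, ha, hba, hgap', rfl⟩
    have h2 : y - x = (1 - v) * (a - b) := by rw [← hxa, ← hyb]; ring
    rw [h2]
    calc (1 - v) * (a - b) ≤ (1 - v) * maxGap v n :=
          mul_le_mul_of_nonneg_left h1 h1v.le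
      _ ≤ max v (1 - v) * maxGap v n :=
          mul_le_mul_of_nonneg_right (le_max_right _ _)
            (maxGap_nonneg hv0 hv1 hn)

theorem stmt_10 (v : ℝ) (hv : v ∈ Set.Ioo (0:ℝ) 1) :
    (Set.Icc (0:ℝ) 1 ⊆ closure (⋃ n : ℕ, tentB v (n+1))) ∧
    ∀ n : ℕ, 1 ≤ n → maxGap v (n+1) ≤ max v (1-v) * maxGap v n := by
  obtain ⟨hv0, hv1⟩ := hv
  constructor
  · intro x hx
    rw [Metric.mem_closure_iff]
    intro ε hε
    have hc1 : max v (1 - v) < 1 := max_lt hv1 (by linarith)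
    have hc0 : 0 ≤ max v (1 - v) := le_trans hv0.le (le_max_left _ _)
    obtain ⟨n, hn⟩ := exists_pow_lt_of_lt_one hε hc1
    obtain ⟨y, hy, hle⟩ := approx hv0 hv1 n x hx
    refine ⟨y, Set.mem_iUnion.2 ⟨n, hy⟩, ?_⟩
    rw [Real.dist_eq]
    exact lt_of_le_of_lt hle hn
  · intro n hn
    rw [maxGap_eq]
    apply Real.sSup_le
    · intro d hd
      exact gap_le hv0 hv1 hn hd
    · exact mul_nonneg (le_trans hv0.le (le_max_left _ _))
        (maxGap_nonneg hv0 hv1 hn)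
end

section
/- Let h be the homeomorphism conjugating the symmetric tent map f to the asymmetric tent map f_v (v ≠ 1/2), i.e., h ∘ f = f_v ∘ h. Then at every point x where the derivative h'(x) exists and is finite, h'(x) = 0. -/
lemma tent_mem {x : ℝ} (hx : x ∈ Set.Icc (0:ℝ) 1) : tent x ∈ Set.Icc (0:ℝ) 1 := by
  obtain ⟨h0, h1⟩ := hx
  unfold tent
  split <;> constructor <;> linarith

lemma tent_iter_mem (n : ℕ) {x : ℝ} (hx : x ∈ Set.Icc (0:ℝ) 1) :
    tent^[n] x ∈ Set.Icc (0:ℝ) 1 := by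
  induction n with
  | zero => simpa
  | succ n ih => rw [Function.iterate_succ_apply']; exact tent_mem ih

lemma affine_image (s c u w : ℝ) (huw : u ≤ w) :
    (fun y => s * y + c) '' Set.Icc u w
      = Set.Icc (min (s*u+c) (s*w+c)) (max (s*u+c) (s*w+c)) := by
  rcases le_or_gt 0 s with hs | hs
  · have h1 : s*u+c ≤ s*w+c := by nlinarith
    rw [min_eq_left h1, max_eq_right h1]
    ext y
    constructor
    · rintro ⟨z, hz, rfl⟩
      dsimp only
      exact ⟨by nlinarith [hz.1, hz.2], by nlinarith [hz.1, hz.2]⟩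
    · intro hy
      rcases eq_or_lt_of_le hs with hs0 | hs0
      · refine ⟨u, ⟨le_refl u, huw⟩, ?_⟩
        have h2 := hy.1; have h3 := hy.2
        dsimp only
        simp only [← hs0] at h2 h3 ⊢
        linarith
      · refine ⟨(y - c)/s, ⟨?_, ?_⟩, ?_⟩
        · rw [le_div_iff₀ hs0]; nlinarith [hy.1]
        · rw [div_le_iff₀ hs0]; nlinarith [hy.2]
        · field_simp; ring
  · have h1 : s*w+c ≤ s*u+c := by nlinarith
    rw [min_eq_right h1, max_eq_left h1]
    ext y
    constructor
    · rintro ⟨z, hz, rfl⟩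
      dsimp only
      exact ⟨by nlinarith [hz.1, hz.2], by nlinarith [hz.1, hz.2]⟩
    · intro hy
      refine ⟨(y - c)/s, ⟨?_, ?_⟩, ?_⟩
      · rw [le_div_iff_of_neg hs]; nlinarith [hy.2]
      · rw [div_le_iff_of_neg hs]; nlinarith [hy.1]
      · field_simp [hs.ne]; ring

lemma tentV_injOn_side {v a b : ℝ} (hv0 : 0 < v) (hv1 : v < 1)
    (hinj : Set.InjOn (tentV v) (Set.Icc a b)) : b ≤ v ∨ v ≤ a := by
  by_contra hc
  push_neg at hc
  obtain ⟨hvb, hav⟩ := hc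
  obtain ⟨t, ht0, ht1, ht2'⟩ : ∃ t : ℝ, 0 < t ∧ t ≤ v - a ∧ t * (1 - v) ≤ (b - v) * v := by
    refine ⟨min (v - a) ((b - v) * v / (1 - v)), lt_min (by linarith)
      (div_pos (mul_pos (by linarith) hv0) (by linarith)), min_le_left _ _, ?_⟩
    have ht2 := min_le_right (v - a) ((b - v) * v / (1 - v))
    rw [le_div_iff₀ (by linarith : (0:ℝ) < 1 - v)] at ht2
    nlinarith [min_le_left (v - a) ((b - v) * v / (1 - v))]
  have hx2v : v < v + t * (1 - v) / v := by
    have : 0 < t * (1 - v) / v := div_pos (mul_pos ht0 (by linarith)) hv0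
    linarith
  have hm1 : v - t ∈ Set.Icc a b := ⟨by linarith, by linarith⟩
  have hm2 : v + t * (1 - v) / v ∈ Set.Icc a b := by
    refine ⟨by linarith, ?_⟩
    have : t * (1 - v) / v ≤ b - v := by rw [div_le_iff₀ hv0]; nlinarith
    linarith
  have heq : tentV v (v - t) = tentV v (v + t * (1 - v) / v) := by
    unfold tentV
    rw [if_pos (by linarith : v - t ≤ v), if_neg (by linarith : ¬ v + t * (1 - v) / v ≤ v)]
    rw [div_eq_div_iff hv0.ne' (by linarith : (1:ℝ) - v ≠ 0)]
    field_simp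
    ring
  have := hinj hm1 hm2 heq
  nlinarith [this]

lemma tentV_full_branch {v a b : ℝ} (hv0 : 0 < v) (hv1 : v < 1)
    (ha : 0 ≤ a) (hab : a ≤ b) (hb : b ≤ 1)
    (hinj : Set.InjOn (tentV v) (Set.Icc a b))
    (himg : tentV v '' (Set.Icc a b) = Set.Icc 0 1) :
    b - a = v ∨ b - a = 1 - v := by
  have h0 : (0:ℝ) ∈ tentV v '' (Set.Icc a b) := by rw [himg]; exact ⟨le_refl 0, by norm_num⟩
  have h1 : (1:ℝ) ∈ tentV v '' (Set.Icc a b) := by rw [himg]; exact ⟨by norm_num, le_refl 1⟩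
  obtain ⟨z0, hz0, hz0v⟩ := h0
  obtain ⟨z1, hz1, hz1v⟩ := h1
  rcases tentV_injOn_side hv0 hv1 hinj with hside | hside
  · left
    unfold tentV at hz0v hz1v
    rw [if_pos (le_trans hz0.2 hside)] at hz0v
    rw [if_pos (le_trans hz1.2 hside)] at hz1v
    have hz00 : z0 = 0 := by
      rw [div_eq_zero_iff] at hz0v; rcases hz0v with h' | h'; exact h'; linarith
    have hz1e : z1 = v := by
      rw [div_eq_one_iff_eq hv0.ne'] at hz1v; exact hz1v
    have e1 : a = 0 := le_antisymm (hz00 ▸ hz0.1) ha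
    have e2 : b = v := le_antisymm hside (hz1e ▸ hz1.2)
    rw [e1, e2]; ring
  · right
    unfold tentV at hz0v hz1v
    have hz1e : z1 = v := by
      by_cases hc : z1 ≤ v
      · rw [if_pos hc] at hz1v; rw [div_eq_one_iff_eq hv0.ne'] at hz1v; exact hz1v
      · rw [if_neg hc] at hz1v
        rw [div_eq_one_iff_eq (by linarith : (1:ℝ) - v ≠ 0)] at hz1v
        linarith
    have e1 : a = v := le_antisymm (hz1e ▸ hz1.1) hside
    have hz0e : z0 = 1 := by
      by_cases hc : z0 ≤ v
      · exfalso
        have : z0 = v := le_antisymm hc (e1 ▸ hz0.1)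
        rw [if_pos hc, this, div_self hv0.ne'] at hz0v
        norm_num at hz0v
      · rw [if_neg hc, div_eq_zero_iff] at hz0v
        rcases hz0v with h' | h'
        · linarith
        · linarith
    have e2 : b = 1 := le_antisymm hb (hz0e ▸ hz0.2)
    rw [e1, e2]
lemma tentV_iter_affine {v : ℝ} (hv0 : 0 < v) (hv1 : v < 1) :
    ∀ (n : ℕ) (a b : ℝ), 0 ≤ a → a ≤ b → b ≤ 1 →
    Set.InjOn ((tentV v)^[n]) (Set.Icc a b) →
    ((tentV v)^[n] '' (Set.Icc a b) = Set.Icc 0 1) →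
    ∃ s c : ℝ, (∀ x ∈ Set.Icc a b, (tentV v)^[n] x = s * x + c) ∧ |s| * (b - a) = 1 := by
  intro n
  induction n with
  | zero =>
    intro a b ha hab hb _ himg
    simp only [Function.iterate_zero, Set.image_id', id_eq] at himg ⊢
    have h1 : a ∈ Set.Icc (0:ℝ) 1 := himg ▸ Set.mem_Icc.mpr ⟨le_refl a, hab⟩
    have h2 : (0:ℝ) ∈ Set.Icc a b := himg ▸ Set.mem_Icc.mpr ⟨le_refl 0, zero_le_one⟩
    have h3 : b ∈ Set.Icc (0:ℝ) 1 := himg ▸ Set.mem_Icc.mpr ⟨hab, le_refl b⟩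
    have h4 : (1:ℝ) ∈ Set.Icc a b := himg ▸ Set.mem_Icc.mpr ⟨zero_le_one, le_refl 1⟩
    have ea : a = 0 := le_antisymm h2.1 h1.1
    have eb : b = 1 := le_antisymm h3.2 h4.2
    exact ⟨1, 0, fun x _ => by ring, by rw [ea, eb]; norm_num⟩
  | succ n ih =>
    intro a b ha hab hb hinj himg
    have hinjg : Set.InjOn (tentV v) (Set.Icc a b) := by
      intro x1 h1 x2 h2 he
      refine hinj h1 h2 ?_
      rw [Function.iterate_succ_apply, Function.iterate_succ_apply, he]
    -- common continuation
    have main : ∀ s₀ c₀ : ℝ, s₀ ≠ 0 →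
        (∀ x ∈ Set.Icc a b, tentV v x = s₀ * x + c₀) →
        0 ≤ min (s₀*a+c₀) (s₀*b+c₀) → max (s₀*a+c₀) (s₀*b+c₀) ≤ 1 →
        ∃ s c : ℝ, (∀ x ∈ Set.Icc a b, (tentV v)^[n+1] x = s * x + c) ∧
          |s| * (b - a) = 1 := by
      intro s₀ c₀ hs₀ key h0m h1m
      have himg2 : tentV v '' (Set.Icc a b)
          = Set.Icc (min (s₀*a+c₀) (s₀*b+c₀)) (max (s₀*a+c₀) (s₀*b+c₀)) := by
        rw [Set.image_congr key]
        exact affine_image s₀ c₀ a b hab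
      have hlen : max (s₀*a+c₀) (s₀*b+c₀) - min (s₀*a+c₀) (s₀*b+c₀) = |s₀| * (b - a) := by
        rw [max_sub_min_eq_abs,
          show s₀*b+c₀ - (s₀*a+c₀) = s₀ * (b - a) by ring, abs_mul,
          abs_of_nonneg (by linarith : (0:ℝ) ≤ b - a)]
      have hinj' : Set.InjOn ((tentV v)^[n])
          (Set.Icc (min (s₀*a+c₀) (s₀*b+c₀)) (max (s₀*a+c₀) (s₀*b+c₀))) := by
        rw [← himg2]
        rintro _ ⟨x1, hx1, rfl⟩ _ ⟨x2, hx2, rfl⟩ he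
        rw [← Function.iterate_succ_apply, ← Function.iterate_succ_apply] at he
        exact congrArg (tentV v) (hinj hx1 hx2 he)
      have himg' : (tentV v)^[n] '' (Set.Icc (min (s₀*a+c₀) (s₀*b+c₀)) (max (s₀*a+c₀) (s₀*b+c₀)))
          = Set.Icc 0 1 := by
        rw [← himg2, ← Set.image_comp]
        rw [show ((tentV v)^[n] ∘ tentV v) = (tentV v)^[n+1] from
          (Function.iterate_succ (tentV v) n).symm]
        exact himg
      obtain ⟨s, c, hsc, hnorm⟩ := ih (min (s₀*a+c₀) (s₀*b+c₀)) (max (s₀*a+c₀) (s₀*b+c₀))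
        h0m min_le_max h1m hinj' himg'
      refine ⟨s * s₀, s * c₀ + c, ?_, ?_⟩
      · intro x hx
        have hmem : tentV v x ∈ Set.Icc (min (s₀*a+c₀) (s₀*b+c₀)) (max (s₀*a+c₀) (s₀*b+c₀)) := by
          rw [← himg2]; exact ⟨x, hx, rfl⟩
        rw [Function.iterate_succ_apply, hsc _ hmem, key x hx]
        ring
      · rw [abs_mul]
        calc |s| * |s₀| * (b - a) = |s| * (|s₀| * (b - a)) := by ring
          _ = |s| * (max (s₀*a+c₀) (s₀*b+c₀) - min (s₀*a+c₀) (s₀*b+c₀)) := by rw [hlen]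
          _ = 1 := hnorm
    have h1v : (0:ℝ) < 1 - v := by linarith
    rcases tentV_injOn_side hv0 hv1 hinjg with hside | hside
    · -- b ≤ v : tentV v x = x / v
      refine main v⁻¹ 0 (inv_ne_zero hv0.ne') ?_ ?_ ?_
      · intro x hx
        unfold tentV
        rw [if_pos (le_trans hx.2 hside), div_eq_inv_mul]
        ring
      · have hvi : (0:ℝ) ≤ v⁻¹ := inv_nonneg.mpr hv0.le
        exact le_min (by nlinarith) (by nlinarith)
      · have h1 : v⁻¹ * v = 1 := inv_mul_cancel₀ hv0.ne'
        have hvi : (0:ℝ) ≤ v⁻¹ := inv_nonneg.mpr hv0.le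
        have hb1 : v⁻¹ * b + 0 ≤ 1 := by nlinarith
        have ha1 : v⁻¹ * a + 0 ≤ 1 := by nlinarith
        exact max_le ha1 hb1
    · -- v ≤ a : tentV v x = (1 - x) / (1 - v)
      have hkey2 : ∀ x ∈ Set.Icc a b, tentV v x = -(1-v)⁻¹ * x + (1-v)⁻¹ := by
        intro x hx
        unfold tentV
        split_ifs with hc
        · have hxv : x = v := le_antisymm hc (le_trans hside hx.1)
          rw [hxv, div_self hv0.ne']
          field_simp
          ring
        · rw [div_eq_inv_mul]
          ring
      have hvi : (0:ℝ) ≤ (1-v)⁻¹ := inv_nonneg.mpr h1v.le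
      have h1 : (1-v)⁻¹ * (1-v) = 1 := inv_mul_cancel₀ h1v.ne'
      refine main (-(1-v)⁻¹) ((1-v)⁻¹) (by simp [h1v.ne']) hkey2 ?_ ?_
      · have hA : (0:ℝ) ≤ -(1-v)⁻¹ * a + (1-v)⁻¹ := by nlinarith
        have hB : (0:ℝ) ≤ -(1-v)⁻¹ * b + (1-v)⁻¹ := by nlinarith
        exact le_min hA hB
      · have hA : -(1-v)⁻¹ * a + (1-v)⁻¹ ≤ 1 := by nlinarith
        have hB : -(1-v)⁻¹ * b + (1-v)⁻¹ ≤ 1 := by nlinarith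
        exact max_le hA hB


noncomputable def dyad (x : ℝ) : ℕ → ℝ × ℝ
  | 0 => (0, 1)
  | n+1 =>
    if x ≤ ((dyad x n).1 + (dyad x n).2)/2 then ((dyad x n).1, ((dyad x n).1 + (dyad x n).2)/2)
    else (((dyad x n).1 + (dyad x n).2)/2, (dyad x n).2)

lemma tent_left {z : ℝ} (hz : z ≤ 1/2) : tent z = 2*z := if_pos hz

lemma tent_right {z : ℝ} (hz : 1/2 ≤ z) : tent z = 2 - 2*z := by
  unfold tent
  split_ifs with hw
  · have : z = 1/2 := le_antisymm hw hz
    rw [this]; norm_num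
  · rfl

lemma dyad_mem {x : ℝ} (hx : x ∈ Set.Icc (0:ℝ) 1) (n : ℕ) :
    0 ≤ (dyad x n).1 ∧ (dyad x n).1 ≤ x ∧ x ≤ (dyad x n).2 ∧ (dyad x n).2 ≤ 1 ∧
      (dyad x n).2 - (dyad x n).1 = (1/2)^n := by
  induction n with
  | zero => exact ⟨le_refl 0, hx.1, hx.2, le_refl 1, by norm_num [dyad]⟩
  | succ n ih =>
    obtain ⟨h0, h1, h2, h3, h4⟩ := ih
    have hpow : ((1:ℝ)/2)^(n+1) = (1/2)^n / 2 := by rw [pow_succ]; ring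
    simp only [dyad]
    split_ifs with hc
    · exact ⟨h0, h1, hc, by simp only []; linarith, by simp only []; linarith⟩
    · push_neg at hc
      exact ⟨by simp only []; linarith, by simp only []; linarith [hc.le], h2, h3,
        by simp only []; linarith⟩

lemma dyad_nested {x : ℝ} (hx : x ∈ Set.Icc (0:ℝ) 1) (n : ℕ) :
    (dyad x n).1 ≤ (dyad x (n+1)).1 ∧ (dyad x (n+1)).2 ≤ (dyad x n).2 := by
  obtain ⟨h0, h1, h2, h3, h4⟩ := dyad_mem hx n
  simp only [dyad]
  split_ifs <;> constructor <;> simp only [] <;> linarith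

lemma tent_dyad_affine {x : ℝ} (hx : x ∈ Set.Icc (0:ℝ) 1) (n : ℕ) :
    ∃ s c : ℝ, (∀ y ∈ Set.Icc (dyad x n).1 (dyad x n).2, tent^[n] y = s * y + c) ∧
      |s| = 2^n ∧
      ((s * (dyad x n).1 + c = 0 ∧ s * (dyad x n).2 + c = 1) ∨
       (s * (dyad x n).1 + c = 1 ∧ s * (dyad x n).2 + c = 0)) := by
  induction n with
  | zero =>
    refine ⟨1, 0, fun y _ => by simp, by simp, Or.inl ⟨by norm_num [dyad], by norm_num [dyad]⟩⟩
  | succ n ih =>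
    obtain ⟨s, c, haff, hs, hend⟩ := ih
    obtain ⟨h0, h1, h2, h3, h4⟩ := dyad_mem hx n
    have hpos : (0:ℝ) < (1/2)^n := by positivity
    have hmid : s * (((dyad x n).1 + (dyad x n).2)/2) + c = 1/2 := by
      have hr : s * (((dyad x n).1 + (dyad x n).2)/2) + c
          = ((s * (dyad x n).1 + c) + (s * (dyad x n).2 + c))/2 := by ring
      rcases hend with ⟨e1, e2⟩ | ⟨e1, e2⟩ <;> rw [hr, e1, e2] <;> norm_num
    have hmb : ((dyad x n).1 + (dyad x n).2)/2 ≤ (dyad x n).2 := by linarith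
    have ham : (dyad x n).1 ≤ ((dyad x n).1 + (dyad x n).2)/2 := by linarith
    simp only [dyad]
    split_ifs with hc
    · -- left half [a, m]
      rcases hend with ⟨e1, e2⟩ | ⟨e1, e2⟩
      · -- increasing: values in [0, 1/2]
        have hspos : 0 < s := by nlinarith
        refine ⟨2*s, 2*c, ?_, ?_, Or.inl ⟨by simp only []; linarith, by simp only []; linarith⟩⟩
        · rintro y ⟨hy1, hy2⟩
          simp only [] at hy1 hy2
          have hmem : y ∈ Set.Icc (dyad x n).1 (dyad x n).2 := ⟨hy1, le_trans hy2 hmb⟩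
          have hval : tent^[n] y ≤ 1/2 := by rw [haff y hmem]; nlinarith
          rw [Function.iterate_succ_apply', tent_left hval, haff y hmem]
          ring
        · rw [abs_mul, hs, abs_of_nonneg (by norm_num : (0:ℝ) ≤ 2), pow_succ]; ring
      · -- decreasing: values in [1/2, 1]
        have hsneg : s < 0 := by nlinarith
        refine ⟨-(2*s), 2 - 2*c, ?_, ?_, Or.inl ⟨by simp only []; linarith, by simp only []; linarith⟩⟩
        · rintro y ⟨hy1, hy2⟩
          simp only [] at hy1 hy2
          have hmem : y ∈ Set.Icc (dyad x n).1 (dyad x n).2 := ⟨hy1, le_trans hy2 hmb⟩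
          have hval : 1/2 ≤ tent^[n] y := by rw [haff y hmem]; nlinarith
          rw [Function.iterate_succ_apply', tent_right hval, haff y hmem]
          ring
        · rw [abs_neg, abs_mul, hs, abs_of_nonneg (by norm_num : (0:ℝ) ≤ 2), pow_succ]; ring
    · -- right half [m, b]
      push_neg at hc
      rcases hend with ⟨e1, e2⟩ | ⟨e1, e2⟩
      · -- increasing: values in [1/2, 1]
        have hspos : 0 < s := by nlinarith
        refine ⟨-(2*s), 2 - 2*c, ?_, ?_, Or.inr ⟨by simp only []; linarith, by simp only []; linarith⟩⟩
        · rintro y ⟨hy1, hy2⟩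
          simp only [] at hy1 hy2
          have hmem : y ∈ Set.Icc (dyad x n).1 (dyad x n).2 := ⟨le_trans ham hy1, hy2⟩
          have hval : 1/2 ≤ tent^[n] y := by rw [haff y hmem]; nlinarith
          rw [Function.iterate_succ_apply', tent_right hval, haff y hmem]
          ring
        · rw [abs_neg, abs_mul, hs, abs_of_nonneg (by norm_num : (0:ℝ) ≤ 2), pow_succ]; ring
      · -- decreasing: values in [0, 1/2]
        have hsneg : s < 0 := by nlinarith
        refine ⟨2*s, 2*c, ?_, ?_, Or.inr ⟨by simp only []; linarith, by simp only []; linarith⟩⟩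
        · rintro y ⟨hy1, hy2⟩
          simp only [] at hy1 hy2
          have hmem : y ∈ Set.Icc (dyad x n).1 (dyad x n).2 := ⟨le_trans ham hy1, hy2⟩
          have hval : tent^[n] y ≤ 1/2 := by rw [haff y hmem]; nlinarith
          rw [Function.iterate_succ_apply', tent_left hval, haff y hmem]
          ring
        · rw [abs_mul, hs, abs_of_nonneg (by norm_num : (0:ℝ) ≤ 2), pow_succ]; ring

theorem stmt_12 (v : ℝ) (hv : v ∈ Set.Ioo (0:ℝ) 1) (hv2 : v ≠ 1/2)
    (h : ℝ → ℝ) (hh : ContinuousOn h (Set.Icc 0 1))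
    (hbij : Set.BijOn h (Set.Icc 0 1) (Set.Icc 0 1))
    (hconj : ∀ x ∈ Set.Icc (0:ℝ) 1, h (tent x) = tentV v (h x)) :
    ∀ x ∈ Set.Icc (0:ℝ) 1, ∀ d : ℝ,
      HasDerivWithinAt h d (Set.Icc 0 1) x → d = 0 := by
  obtain ⟨hv0, hv1⟩ := hv
  intro x hx d hder
  have hmem := dyad_mem hx
  have haIcc : ∀ n, (dyad x n).1 ∈ Set.Icc (0:ℝ) 1 :=
    fun n => ⟨(hmem n).1, le_trans (hmem n).2.1 hx.2⟩
  have hbIcc : ∀ n, (dyad x n).2 ∈ Set.Icc (0:ℝ) 1 :=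
    fun n => ⟨le_trans hx.1 (hmem n).2.2.1, (hmem n).2.2.2.1⟩
  have habn : ∀ n, (dyad x n).1 ≤ (dyad x n).2 :=
    fun n => le_trans (hmem n).2.1 (hmem n).2.2.1
  have hab01 : ∀ n, Set.Icc (dyad x n).1 (dyad x n).2 ⊆ Set.Icc (0:ℝ) 1 :=
    fun n => Set.Icc_subset_Icc (haIcc n).1 (hbIcc n).2
  have hcancel : ∀ n : ℕ, (2:ℝ)^n * (1/2)^n = 1 := fun n => by
    rw [← mul_pow]; norm_num
  -- iterated conjugacy
  have hconjn : ∀ (n : ℕ), ∀ y ∈ Set.Icc (0:ℝ) 1, h (tent^[n] y) = (tentV v)^[n] (h y) := by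
    intro n
    induction n with
    | zero => intro y _; simp
    | succ n ihn =>
      intro y hy
      rw [Function.iterate_succ_apply', Function.iterate_succ_apply',
        hconj _ (tent_iter_mem n hy), ihn y hy]
  -- image of dyadic interval under tent^[n]
  have htimg : ∀ n, tent^[n] '' (Set.Icc (dyad x n).1 (dyad x n).2) = Set.Icc 0 1 := by
    intro n
    obtain ⟨s, c, haff, _, hend⟩ := tent_dyad_affine hx n
    rw [Set.image_congr haff, affine_image s c _ _ (habn n)]
    rcases hend with ⟨e1, e2⟩ | ⟨e1, e2⟩ <;> rw [e1, e2] <;> norm_num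
  -- tent^[n] is injective on dyadic intervals
  have htinj : ∀ n, Set.InjOn (tent^[n]) (Set.Icc (dyad x n).1 (dyad x n).2) := by
    intro n
    obtain ⟨s, c, haff, hs, _⟩ := tent_dyad_affine hx n
    have hsne : s ≠ 0 := by
      intro h0; rw [h0, abs_zero] at hs
      exact absurd hs.symm (ne_of_gt (by positivity))
    intro z1 h1 z2 h2 he
    rw [haff z1 h1, haff z2 h2] at he
    have := add_right_cancel he
    exact mul_left_cancel₀ hsne this
  -- image under h of intervals
  have himgh : ∀ u w : ℝ, u ∈ Set.Icc (0:ℝ) 1 → w ∈ Set.Icc (0:ℝ) 1 → u ≤ w →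
      h '' (Set.Icc u w) = Set.Icc (min (h u) (h w)) (max (h u) (h w)) := by
    intro u w hu hw huw
    have hsub : Set.Icc u w ⊆ Set.Icc (0:ℝ) 1 := Set.Icc_subset_Icc hu.1 hw.2
    rcases hh.strictMonoOn_of_injOn_Icc' zero_le_one hbij.injOn with hm | hm
    · have e1 : min (h u) (h w) = h u := min_eq_left (hm.monotoneOn hu hw huw)
      have e2 : max (h u) (h w) = h w := max_eq_right (hm.monotoneOn hu hw huw)
      rw [e1, e2]
      apply Set.Subset.antisymm
      · rintro _ ⟨z, hz, rfl⟩
        exact ⟨hm.monotoneOn hu (hsub hz) hz.1, hm.monotoneOn (hsub hz) hw hz.2⟩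
      · exact intermediate_value_Icc huw (hh.mono hsub)
    · have e1 : min (h u) (h w) = h w := min_eq_right (hm.antitoneOn hu hw huw)
      have e2 : max (h u) (h w) = h u := max_eq_left (hm.antitoneOn hu hw huw)
      rw [e1, e2]
      apply Set.Subset.antisymm
      · rintro _ ⟨z, hz, rfl⟩
        exact ⟨hm.antitoneOn (hsub hz) hw hz.2, hm.antitoneOn hu (hsub hz) hz.1⟩
      · exact intermediate_value_Icc' huw (hh.mono hsub)
  have hq : ∀ n, h '' (Set.Icc (dyad x n).1 (dyad x n).2)
      = Set.Icc (min (h (dyad x n).1) (h (dyad x n).2)) (max (h (dyad x n).1) (h (dyad x n).2)) :=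
    fun n => himgh _ _ (haIcc n) (hbIcc n) (habn n)
  -- the J_n intervals: injectivity and image of the iterate
  have hinjJ : ∀ n, Set.InjOn ((tentV v)^[n])
      (Set.Icc (min (h (dyad x n).1) (h (dyad x n).2)) (max (h (dyad x n).1) (h (dyad x n).2))) := by
    intro n
    rw [← hq n]
    rintro _ ⟨z1, hz1, rfl⟩ _ ⟨z2, hz2, rfl⟩ he
    rw [← hconjn n z1 (hab01 n hz1), ← hconjn n z2 (hab01 n hz2)] at he
    have h1 := hbij.injOn (tent_iter_mem n (hab01 n hz1)) (tent_iter_mem n (hab01 n hz2)) he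
    exact congrArg h (htinj n hz1 hz2 h1)
  have himgJ : ∀ n, (tentV v)^[n] ''
      (Set.Icc (min (h (dyad x n).1) (h (dyad x n).2)) (max (h (dyad x n).1) (h (dyad x n).2)))
      = Set.Icc 0 1 := by
    intro n
    rw [← hq n, Set.image_image,
      Set.image_congr (fun z hz => (hconjn n z (hab01 n hz)).symm),
      ← Set.image_image h (tent^[n]), htimg n, hbij.image_eq]
  -- bounds on J_n endpoints
  have hPQ0 : ∀ n, 0 ≤ min (h (dyad x n).1) (h (dyad x n).2) :=
    fun n => le_min (hbij.mapsTo (haIcc n)).1 (hbij.mapsTo (hbIcc n)).1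
  have hPQ1 : ∀ n, max (h (dyad x n).1) (h (dyad x n).2) ≤ 1 :=
    fun n => max_le (hbij.mapsTo (haIcc n)).2 (hbij.mapsTo (hbIcc n)).2
  -- the key ratio step
  have hstep : ∀ n : ℕ,
      |h (dyad x (n+1)).2 - h (dyad x (n+1)).1| = v * |h (dyad x n).2 - h (dyad x n).1| ∨
      |h (dyad x (n+1)).2 - h (dyad x (n+1)).1| = (1-v) * |h (dyad x n).2 - h (dyad x n).1| := by
    intro n
    obtain ⟨s, c, haffJ, hnorm⟩ := tentV_iter_affine hv0 hv1 n _ _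
      (hPQ0 n) min_le_max (hPQ1 n) (hinjJ n) (himgJ n)
    have hsubJ : Set.Icc (min (h (dyad x (n+1)).1) (h (dyad x (n+1)).2))
        (max (h (dyad x (n+1)).1) (h (dyad x (n+1)).2))
        ⊆ Set.Icc (min (h (dyad x n).1) (h (dyad x n).2))
          (max (h (dyad x n).1) (h (dyad x n).2)) := by
      rw [← hq n, ← hq (n+1)]
      exact Set.image_mono (f := h)
        (Set.Icc_subset_Icc (dyad_nested hx n).1 (dyad_nested hx n).2)
    -- K : image of J_{n+1} under the affine map
    have hK : (tentV v)^[n] '' (Set.Icc (min (h (dyad x (n+1)).1) (h (dyad x (n+1)).2))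
        (max (h (dyad x (n+1)).1) (h (dyad x (n+1)).2)))
        = Set.Icc
          (min (s * (min (h (dyad x (n+1)).1) (h (dyad x (n+1)).2)) + c)
               (s * (max (h (dyad x (n+1)).1) (h (dyad x (n+1)).2)) + c))
          (max (s * (min (h (dyad x (n+1)).1) (h (dyad x (n+1)).2)) + c)
               (s * (max (h (dyad x (n+1)).1) (h (dyad x (n+1)).2)) + c)) := by
      rw [Set.image_congr (fun z hz => haffJ z (hsubJ hz))]
      exact affine_image s c _ _ min_le_max
    have hKsub : Set.Icc
          (min (s * (min (h (dyad x (n+1)).1) (h (dyad x (n+1)).2)) + c)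
               (s * (max (h (dyad x (n+1)).1) (h (dyad x (n+1)).2)) + c))
          (max (s * (min (h (dyad x (n+1)).1) (h (dyad x (n+1)).2)) + c)
               (s * (max (h (dyad x (n+1)).1) (h (dyad x (n+1)).2)) + c)) ⊆ Set.Icc 0 1 := by
      rw [← hK, ← himgJ n]
      exact Set.image_mono hsubJ
    have hKinj : Set.InjOn (tentV v) (Set.Icc
          (min (s * (min (h (dyad x (n+1)).1) (h (dyad x (n+1)).2)) + c)
               (s * (max (h (dyad x (n+1)).1) (h (dyad x (n+1)).2)) + c))
          (max (s * (min (h (dyad x (n+1)).1) (h (dyad x (n+1)).2)) + c)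
               (s * (max (h (dyad x (n+1)).1) (h (dyad x (n+1)).2)) + c))) := by
      rw [← hK]
      rintro _ ⟨y1, hy1, rfl⟩ _ ⟨y2, hy2, rfl⟩ he
      rw [← Function.iterate_succ_apply' (tentV v) n y1,
        ← Function.iterate_succ_apply' (tentV v) n y2] at he
      exact congrArg _ (hinjJ (n+1) hy1 hy2 he)
    have hKimg : tentV v '' (Set.Icc
          (min (s * (min (h (dyad x (n+1)).1) (h (dyad x (n+1)).2)) + c)
               (s * (max (h (dyad x (n+1)).1) (h (dyad x (n+1)).2)) + c))
          (max (s * (min (h (dyad x (n+1)).1) (h (dyad x (n+1)).2)) + c)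
               (s * (max (h (dyad x (n+1)).1) (h (dyad x (n+1)).2)) + c))) = Set.Icc 0 1 := by
      rw [← hK, Set.image_image,
        Set.image_congr (fun z _ => (Function.iterate_succ_apply' (tentV v) n z).symm)]
      exact himgJ (n+1)
    have hKmem0 := hKsub (Set.left_mem_Icc.mpr min_le_max)
    have hKmem1 := hKsub (Set.right_mem_Icc.mpr min_le_max)
    have hbranch := tentV_full_branch hv0 hv1 hKmem0.1 min_le_max hKmem1.2 hKinj hKimg
    -- compute the length of K
    have hKlen : max (s * (min (h (dyad x (n+1)).1) (h (dyad x (n+1)).2)) + c)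
               (s * (max (h (dyad x (n+1)).1) (h (dyad x (n+1)).2)) + c)
          - min (s * (min (h (dyad x (n+1)).1) (h (dyad x (n+1)).2)) + c)
               (s * (max (h (dyad x (n+1)).1) (h (dyad x (n+1)).2)) + c)
          = |s| * |h (dyad x (n+1)).2 - h (dyad x (n+1)).1| := by
      rw [max_sub_min_eq_abs,
        show s * (max (h (dyad x (n+1)).1) (h (dyad x (n+1)).2)) + c
          - (s * (min (h (dyad x (n+1)).1) (h (dyad x (n+1)).2)) + c)
          = s * ((max (h (dyad x (n+1)).1) (h (dyad x (n+1)).2))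
            - (min (h (dyad x (n+1)).1) (h (dyad x (n+1)).2))) from by ring,
        abs_mul, max_sub_min_eq_abs, abs_abs]
    have hnorm' : |s| * |h (dyad x n).2 - h (dyad x n).1| = 1 := by
      rw [← max_sub_min_eq_abs]
      exact hnorm
    rw [hKlen] at hbranch
    rcases hbranch with e | e
    · left
      have h' : |s| * |h (dyad x (n+1)).2 - h (dyad x (n+1)).1|
          * |h (dyad x n).2 - h (dyad x n).1| = v * |h (dyad x n).2 - h (dyad x n).1| := by
        rw [e]
      rwa [show |s| * |h (dyad x (n+1)).2 - h (dyad x (n+1)).1|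
          * |h (dyad x n).2 - h (dyad x n).1|
          = |h (dyad x (n+1)).2 - h (dyad x (n+1)).1|
            * (|s| * |h (dyad x n).2 - h (dyad x n).1|) from by ring,
        hnorm', mul_one] at h'
    · right
      have h' : |s| * |h (dyad x (n+1)).2 - h (dyad x (n+1)).1|
          * |h (dyad x n).2 - h (dyad x n).1| = (1-v) * |h (dyad x n).2 - h (dyad x n).1| := by
        rw [e]
      rwa [show |s| * |h (dyad x (n+1)).2 - h (dyad x (n+1)).1|
          * |h (dyad x n).2 - h (dyad x n).1|
          = |h (dyad x (n+1)).2 - h (dyad x (n+1)).1|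
            * (|s| * |h (dyad x n).2 - h (dyad x n).1|) from by ring,
        hnorm', mul_one] at h'
  -- convergence to d of the difference quotients
  have hT : Filter.Tendsto (fun n : ℕ => (2:ℝ)^n * (h (dyad x n).2 - h (dyad x n).1))
      Filter.atTop (nhds d) := by
    have hhalf : Filter.Tendsto (fun n : ℕ => ((1:ℝ)/2)^n) Filter.atTop (nhds 0) :=
      tendsto_pow_atTop_nhds_zero_of_lt_one (by norm_num) (by norm_num)
    have hta : Filter.Tendsto (fun n : ℕ => (dyad x n).1) Filter.atTop (nhds x) := by
      apply tendsto_of_tendsto_of_tendsto_of_le_of_le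
        (g := fun n : ℕ => x - (1/2)^n) (h := fun _ : ℕ => x)
      · simpa using tendsto_const_nhds.sub hhalf
      · exact tendsto_const_nhds
      · intro n; have := (hmem n).2.2.2.2; have := (hmem n).2.2.1; simp only []; linarith
      · intro n; exact (hmem n).2.1
    have htb : Filter.Tendsto (fun n : ℕ => (dyad x n).2) Filter.atTop (nhds x) := by
      apply tendsto_of_tendsto_of_tendsto_of_le_of_le
        (g := fun _ : ℕ => x) (h := fun n : ℕ => x + (1/2)^n)
      · exact tendsto_const_nhds
      · simpa using tendsto_const_nhds.add hhalf
      · intro n; exact (hmem n).2.2.1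
      · intro n; have := (hmem n).2.2.2.2; have := (hmem n).2.1; simp only []; linarith
    have hta' : Filter.Tendsto (fun n : ℕ => (dyad x n).1) Filter.atTop
        (nhdsWithin x (Set.Icc 0 1)) :=
      tendsto_nhdsWithin_of_tendsto_nhds_of_eventually_within _ hta
        (Filter.Eventually.of_forall (fun n => haIcc n))
    have htb' : Filter.Tendsto (fun n : ℕ => (dyad x n).2) Filter.atTop
        (nhdsWithin x (Set.Icc 0 1)) :=
      tendsto_nhdsWithin_of_tendsto_nhds_of_eventually_within _ htb
        (Filter.Eventually.of_forall (fun n => hbIcc n))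
    rw [Metric.tendsto_atTop]
    intro ε hε
    have hlo := hder.isLittleO
    have hev := Asymptotics.isLittleO_iff.mp hlo (show (0:ℝ) < ε/4 by linarith)
    have hea := hta'.eventually hev
    have heb := htb'.eventually hev
    obtain ⟨N, hN⟩ := Filter.eventually_atTop.mp (hea.and heb)
    refine ⟨N, fun n hn => ?_⟩
    obtain ⟨HA, HB⟩ := hN n hn
    simp only [Real.norm_eq_abs, ContinuousLinearMap.smulRight_apply,
      ContinuousLinearMap.one_apply, smul_eq_mul] at HA HB
    have hp0 : (0:ℝ) < (1/2)^n := by positivity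
    have hscale : |(dyad x n).1 - x| ≤ (1/2)^n := by
      rw [abs_le]
      constructor
      · have := (hmem n).2.2.2.2; have := (hmem n).2.2.1; linarith
      · have := (hmem n).2.1; linarith
    have hscale' : |(dyad x n).2 - x| ≤ (1/2)^n := by
      rw [abs_le]
      constructor
      · have := (hmem n).2.2.1; linarith
      · have := (hmem n).2.2.2.2; have := (hmem n).2.1; linarith
    have h2p : (0:ℝ) < 2^n := by positivity
    have hid : (2:ℝ)^n * (h (dyad x n).2 - h (dyad x n).1) - d
        = (2:ℝ)^n * ((h (dyad x n).2 - h x - ((dyad x n).2 - x) * d)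
          - (h (dyad x n).1 - h x - ((dyad x n).1 - x) * d)) := by
      have hlen := (hmem n).2.2.2.2
      have hmul := hcancel n
      linear_combination ((2:ℝ)^n * d) * hlen + d * hmul
    rw [Real.dist_eq, hid, abs_mul, abs_of_pos h2p]
    have hbound : |(h (dyad x n).2 - h x - ((dyad x n).2 - x) * d)
        - (h (dyad x n).1 - h x - ((dyad x n).1 - x) * d)|
        ≤ ε/4 * (1/2)^n + ε/4 * (1/2)^n := by
      refine le_trans (abs_sub _ _) ?_
      have b1 : |h (dyad x n).2 - h x - ((dyad x n).2 - x) * d| ≤ ε/4 * (1/2)^n := by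
        refine le_trans HB ?_
        have : |(dyad x n).2 - x| ≤ (1/2)^n := hscale'
        nlinarith
      have b2 : |h (dyad x n).1 - h x - ((dyad x n).1 - x) * d| ≤ ε/4 * (1/2)^n := by
        refine le_trans HA ?_
        nlinarith [hscale]
      linarith
    calc (2:ℝ)^n * |(h (dyad x n).2 - h x - ((dyad x n).2 - x) * d)
        - (h (dyad x n).1 - h x - ((dyad x n).1 - x) * d)|
        ≤ (2:ℝ)^n * (ε/4 * (1/2)^n + ε/4 * (1/2)^n) := by
          exact mul_le_mul_of_nonneg_left hbound h2p.le
      _ = ε/2 := by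
          have := hcancel n
          nlinarith [hcancel n]
      _ < ε := by linarith
  -- finish: the ratio argument
  have hU : Filter.Tendsto (fun n : ℕ => |(2:ℝ)^n * (h (dyad x n).2 - h (dyad x n).1)|)
      Filter.atTop (nhds |d|) := hT.abs
  have hU1 : Filter.Tendsto (fun n : ℕ => |(2:ℝ)^(n+1) * (h (dyad x (n+1)).2 - h (dyad x (n+1)).1)|)
      Filter.atTop (nhds |d|) := by
    exact hU.comp (Filter.tendsto_add_atTop_nat 1)
  have habs : ∀ n : ℕ, |(2:ℝ)^(n+1) * (h (dyad x (n+1)).2 - h (dyad x (n+1)).1)|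
      - |(2:ℝ)^n * (h (dyad x n).2 - h (dyad x n).1)|
      = (2 * v - 1) * |(2:ℝ)^n * (h (dyad x n).2 - h (dyad x n).1)| ∨
      |(2:ℝ)^(n+1) * (h (dyad x (n+1)).2 - h (dyad x (n+1)).1)|
      - |(2:ℝ)^n * (h (dyad x n).2 - h (dyad x n).1)|
      = (1 - 2 * v) * |(2:ℝ)^n * (h (dyad x n).2 - h (dyad x n).1)| := by
    intro n
    have h2p : (0:ℝ) < 2^n := by positivity
    have h2p1 : (0:ℝ) < 2^(n+1) := by positivity
    rw [abs_mul, abs_mul, abs_of_pos h2p, abs_of_pos h2p1, pow_succ]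
    rcases hstep n with e | e
    · left; rw [e]; ring
    · right; rw [e]; ring
  have hdiff : Filter.Tendsto (fun n : ℕ =>
      |(2:ℝ)^(n+1) * (h (dyad x (n+1)).2 - h (dyad x (n+1)).1)|
      - |(2:ℝ)^n * (h (dyad x n).2 - h (dyad x n).1)|) Filter.atTop (nhds 0) := by
    simpa using hU1.sub hU
  have hdiffabs : Filter.Tendsto (fun n : ℕ =>
      |2 * v - 1| * |(2:ℝ)^n * (h (dyad x n).2 - h (dyad x n).1)|) Filter.atTop (nhds 0) := by
    have : (fun n : ℕ => |2 * v - 1| * |(2:ℝ)^n * (h (dyad x n).2 - h (dyad x n).1)|)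
        = fun n : ℕ => abs (|(2:ℝ)^(n+1) * (h (dyad x (n+1)).2 - h (dyad x (n+1)).1)|
          - |(2:ℝ)^n * (h (dyad x n).2 - h (dyad x n).1)|) := by
      funext n
      rcases habs n with e | e <;> rw [e]
      · rw [abs_mul (2*v-1), abs_abs]
      · rw [abs_mul (1-2*v), abs_abs, abs_sub_comm 1 (2*v)]
    rw [this]
    simpa using hdiff.abs
  have hlim2 : Filter.Tendsto (fun n : ℕ =>
      |2 * v - 1| * |(2:ℝ)^n * (h (dyad x n).2 - h (dyad x n).1)|) Filter.atTop
      (nhds (|2 * v - 1| * |d|)) := hU.const_mul _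
  have hzero : |2 * v - 1| * |d| = 0 := tendsto_nhds_unique hlim2 hdiffabs
  have hvne : |2 * v - 1| ≠ 0 := by
    rw [abs_ne_zero]
    intro hc
    apply hv2
    linarith
  have : |d| = 0 := by
    rcases mul_eq_zero.mp hzero with h' | h'
    · exact absurd h' hvne
    · exact h'
  exact abs_eq_zero.mp this
end

section
/- Let f be the symmetric tent map. If ξ : [0,1] → [0,1] is a continuous solution of ξ(f(x)) = f(ξ(x)) for all x, and ξ is constant on some nondegenerate interval [α, β] ⊆ [0,1], then ξ is constant on all of [0,1]. -/
lemma tent_le_half (x : ℝ) (h : x ≤ 1/2) : tent x = 2*x := if_pos h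

lemma tent_ge_half (x : ℝ) (h : 1/2 ≤ x) : tent x = 2 - 2*x := by
  unfold tent; split <;> nlinarith

section aux
variable (ξ : ℝ → ℝ) (hcomm : ∀ x ∈ Set.Icc (0:ℝ) 1, ξ (tent x) = tent (ξ x))

include hcomm

lemma stepL (a b c : ℝ) (h0 : 0 ≤ a) (hb : b ≤ 1/2)
    (hc : ∀ x ∈ Set.Icc a b, ξ x = c) :
    ∀ y ∈ Set.Icc (2*a) (2*b), ξ y = tent c := by
  intro y hy
  obtain ⟨hy1, hy2⟩ := hy
  have hx : y/2 ∈ Set.Icc a b := ⟨by linarith, by linarith⟩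
  have h01 : y/2 ∈ Set.Icc (0:ℝ) 1 := ⟨by linarith, by linarith⟩
  have ht : tent (y/2) = y := by rw [tent_le_half _ (by linarith)]; ring
  calc ξ y = ξ (tent (y/2)) := by rw [ht]
    _ = tent (ξ (y/2)) := hcomm _ h01
    _ = tent c := by rw [hc _ hx]

lemma stepR (a b c : ℝ) (ha : 1/2 ≤ a) (hb : b ≤ 1)
    (hc : ∀ x ∈ Set.Icc a b, ξ x = c) :
    ∀ y ∈ Set.Icc (2 - 2*b) (2 - 2*a), ξ y = tent c := by
  intro y hy
  obtain ⟨hy1, hy2⟩ := hy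
  have hx : 1 - y/2 ∈ Set.Icc a b := ⟨by linarith, by linarith⟩
  have h01 : 1 - y/2 ∈ Set.Icc (0:ℝ) 1 := ⟨by linarith, by linarith⟩
  have ht : tent (1 - y/2) = y := by rw [tent_ge_half _ (by linarith)]; ring
  calc ξ y = ξ (tent (1 - y/2)) := by rw [ht]
    _ = tent (ξ (1 - y/2)) := hcomm _ h01
    _ = tent c := by rw [hc _ hx]

lemma lemA : ∀ n : ℕ, ∀ b c : ℝ, b ≤ 1 → (1/2:ℝ)^n ≤ b →
    (∀ x ∈ Set.Icc (0:ℝ) b, ξ x = c) →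
    ∃ c' : ℝ, ∀ x ∈ Set.Icc (0:ℝ) 1, ξ x = c' := by
  intro n
  induction n with
  | zero =>
    intro b c hb1 hbn hc
    simp only [pow_zero] at hbn
    exact ⟨c, fun x hx => hc x ⟨hx.1, by linarith [hx.2]⟩⟩
  | succ n ih =>
    intro b c hb1 hbn hc
    have hp : (0:ℝ) < (1/2:ℝ)^n := by positivity
    rw [pow_succ] at hbn
    rcases le_or_gt (1/2) b with h | h
    · -- [0,b] ⊇ [0,1/2], image covers [0,1]
      have := stepL ξ hcomm 0 (1/2) c le_rfl le_rfl
        (fun x hx => hc x ⟨hx.1, by linarith [hx.2]⟩)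
      refine ⟨tent c, fun y hy => this y ?_⟩
      constructor <;> [linarith [hy.1]; linarith [hy.2]]
    · have := stepL ξ hcomm 0 b c le_rfl (by linarith) hc
      have h2 : ∀ x ∈ Set.Icc (0:ℝ) (2*b), ξ x = tent c := by
        intro x hx; exact this x ⟨by linarith [hx.1], hx.2⟩
      exact ih (2*b) (tent c) (by linarith) (by linarith) h2

lemma lemB : ∀ n : ℕ, ∀ m c : ℝ, 0 ≤ m → (1/2:ℝ)^n ≤ 1 - m →
    (∀ x ∈ Set.Icc m 1, ξ x = c) →
    ∃ c' : ℝ, ∀ x ∈ Set.Icc (0:ℝ) 1, ξ x = c' := by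
  intro n
  induction n with
  | zero =>
    intro m c hm hmn hc
    simp only [pow_zero] at hmn
    exact ⟨c, fun x hx => hc x ⟨by linarith [hx.1], hx.2⟩⟩
  | succ n ih =>
    intro m c hm hmn hc
    have hp : (0:ℝ) < (1/2:ℝ)^n := by positivity
    rw [pow_succ] at hmn
    rcases le_or_gt m (1/2) with h | h
    · -- [m,1] ⊇ [1/2,1], image covers [0,1]
      have := stepR ξ hcomm (1/2) 1 c le_rfl le_rfl
        (fun x hx => hc x ⟨by linarith [hx.1], hx.2⟩)
      refine ⟨tent c, fun y hy => this y ?_⟩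
      constructor <;> [linarith [hy.1]; linarith [hy.2]]
    · have := stepR ξ hcomm m 1 c (by linarith) le_rfl hc
      have h2 : ∀ x ∈ Set.Icc (0:ℝ) (2 - 2*m), ξ x = tent c := by
        intro x hx; exact this x ⟨by linarith [hx.1], hx.2⟩
      exact lemA ξ hcomm n (2 - 2*m) (tent c) (by linarith) (by linarith) h2

lemma lemC : ∀ n : ℕ, ∀ a b c : ℝ, 0 ≤ a → b ≤ 1 → (1/2:ℝ)^n ≤ b - a →
    (∀ x ∈ Set.Icc a b, ξ x = c) →
    ∃ c' : ℝ, ∀ x ∈ Set.Icc (0:ℝ) 1, ξ x = c' := by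
  intro n
  induction n with
  | zero =>
    intro a b c ha hb hn hc
    simp only [pow_zero] at hn
    exact ⟨c, fun x hx => hc x ⟨by linarith [hx.1], by linarith [hx.2]⟩⟩
  | succ n ih =>
    intro a b c ha hb hn hc
    have hp : (0:ℝ) < (1/2:ℝ)^n := by positivity
    rw [pow_succ] at hn
    rcases le_or_gt b (1/2) with h | h
    · have := stepL ξ hcomm a b c ha h hc
      exact ih (2*a) (2*b) (tent c) (by linarith) (by linarith) (by linarith) this
    rcases le_or_gt (1/2) a with h' | h'
    · have := stepR ξ hcomm a b c h' hb hc
      exact ih (2 - 2*b) (2 - 2*a) (tent c) (by linarith) (by linarith) (by linarith) this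
    rcases le_total (1/2 - a) (b - 1/2) with hs | hs
    · -- use right half [1/2, b]; image [2-2b, 1]
      have := stepR ξ hcomm (1/2) b c le_rfl hb
        (fun x hx => hc x ⟨by linarith [hx.1], hx.2⟩)
      have h2 : ∀ x ∈ Set.Icc (2 - 2*b) 1, ξ x = tent c := by
        intro x hx; exact this x ⟨hx.1, by linarith [hx.2]⟩
      exact lemB ξ hcomm (n+1) (2 - 2*b) (tent c) (by linarith)
        (by rw [pow_succ]; linarith) h2
    · -- use left half [a, 1/2]; image [2a, 1]
      have := stepL ξ hcomm a (1/2) c ha le_rfl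
        (fun x hx => hc x ⟨hx.1, by linarith [hx.2]⟩)
      have h2 : ∀ x ∈ Set.Icc (2*a) 1, ξ x = tent c := by
        intro x hx; exact this x ⟨hx.1, by linarith [hx.2]⟩
      exact lemB ξ hcomm (n+1) (2*a) (tent c) (by linarith)
        (by rw [pow_succ]; linarith) h2

end aux

theorem stmt_14 (ξ : ℝ → ℝ) (hc : ContinuousOn ξ (Set.Icc 0 1))
    (hmaps : Set.MapsTo ξ (Set.Icc 0 1) (Set.Icc 0 1))
    (hcomm : ∀ x ∈ Set.Icc (0:ℝ) 1, ξ (tent x) = tent (ξ x))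
    (α β : ℝ) (hα : 0 ≤ α) (hαβ : α < β) (hβ : β ≤ 1)
    (c : ℝ) (hconst : ∀ x ∈ Set.Icc α β, ξ x = c) :
    ∃ c' : ℝ, ∀ x ∈ Set.Icc (0:ℝ) 1, ξ x = c' := by
  obtain ⟨n, hn⟩ := exists_pow_lt_of_lt_one (by linarith : (0:ℝ) < β - α)
    (by norm_num : (1/2:ℝ) < 1)
  exact lemC ξ hcomm n α β c hα hβ hn.le hconst
end

section
/- For every natural number k ≥ 1, the function ξ(x) = (1 - (-1)^⌊kx⌋)/2 + (-1)^⌊kx⌋·{kx} (where {·} is the fractional part and ⌊·⌋ the floor) satisfies ξ(f(x)) = f(ξ(x)) for all x ∈ [0,1], where f is the symmetric tent map. -/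
noncomputable def zigzag (k : ℕ) (x : ℝ) : ℝ :=
  (1 - (-1:ℝ) ^ Int.floor ((k:ℝ) * x)) / 2
    + (-1:ℝ) ^ Int.floor ((k:ℝ) * x) * Int.fract ((k:ℝ) * x)

/-- The triangle wave: `ww (k*x) = zigzag k x`. -/
noncomputable def ww (y : ℝ) : ℝ :=
  (1 - (-1:ℝ) ^ Int.floor y) / 2 + (-1:ℝ) ^ Int.floor y * Int.fract y

lemma ww_self (y : ℝ) :
    ww y = (1 - (-1:ℝ)^⌊y⌋)/2 + (-1:ℝ)^⌊y⌋ * Int.fract y := rfl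

lemma ww_eval (n : ℤ) (t : ℝ) (h0 : 0 ≤ t) (h1 : t < 1) :
    ww ((n:ℝ) + t) = (1 - (-1:ℝ)^n)/2 + (-1:ℝ)^n * t := by
  unfold ww
  rw [Int.floor_intCast_add, Int.fract_intCast_add, Int.floor_eq_zero_iff.2 ⟨h0, h1⟩,
    Int.fract_eq_self.2 ⟨h0, h1⟩, add_zero]

lemma ww_int (n : ℤ) : ww ((n:ℝ)) = (1 - (-1:ℝ)^n)/2 := by
  unfold ww
  rw [Int.floor_intCast, Int.fract_intCast]
  ring

lemma ww_decomp (y : ℝ) : y = (↑⌊y⌋ : ℝ) + Int.fract y := by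
  rw [Int.fract]; ring

lemma neg_one_zpow_even {n : ℤ} (h : Even n) : ((-1:ℝ))^n = 1 := Even.neg_one_zpow h
lemma neg_one_zpow_odd {n : ℤ} (h : Odd n) : ((-1:ℝ))^n = -1 := Odd.neg_one_zpow h

lemma ww_period (y : ℝ) (j : ℤ) : ww (y + 2*j) = ww y := by
  have h : y + 2*(j:ℝ) = (↑(⌊y⌋ + 2*j) : ℝ) + Int.fract y := by
    push_cast; rw [Int.fract]; ring
  rw [h, ww_eval _ _ (Int.fract_nonneg y) (Int.fract_lt_one y)]
  have hp : ((-1:ℝ))^(⌊y⌋ + 2*j) = (-1:ℝ)^⌊y⌋ := by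
    rw [zpow_add₀ (by norm_num : (-1:ℝ) ≠ 0), zpow_mul]
    norm_num
  rw [hp, ww_self]

lemma ww_neg (y : ℝ) : ww (-y) = ww y := by
  by_cases h : Int.fract y = 0
  · have hy : y = (↑⌊y⌋ : ℝ) := by
      have := ww_decomp y; rw [h, add_zero] at this; exact this
    rw [hy, ← Int.cast_neg, ww_int, ww_int]
    rcases Int.even_or_odd ⌊y⌋ with he | ho
    · rw [neg_one_zpow_even he, neg_one_zpow_even he.neg]
    · rw [neg_one_zpow_odd ho, neg_one_zpow_odd ho.neg]
  · have hf0 : 0 < Int.fract y := lt_of_le_of_ne (Int.fract_nonneg y) (Ne.symm h)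
    have hf1 : Int.fract y < 1 := Int.fract_lt_one y
    have h1 : -y = ((-⌊y⌋ - 1 : ℤ) : ℝ) + (1 - Int.fract y) := by
      push_cast; rw [Int.fract]; ring
    rw [h1, ww_eval _ _ (by linarith) (by linarith), ww_self]
    rcases Int.even_or_odd ⌊y⌋ with he | ho
    · have ho' : Odd (-⌊y⌋ - 1) := by
        rcases he with ⟨m, hm⟩; exact ⟨-m - 1, by omega⟩
      rw [neg_one_zpow_odd ho', neg_one_zpow_even he]; ring
    · have he' : Even (-⌊y⌋ - 1) := by
        rcases ho with ⟨m, hm⟩; exact ⟨-m - 1, by omega⟩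
      rw [neg_one_zpow_even he', neg_one_zpow_odd ho]; ring

lemma ww_rep (y : ℝ) : ∃ j : ℤ, ww y = y + 2*j ∨ ww y = -y + 2*j := by
  rw [ww_self]
  rcases Int.even_or_odd ⌊y⌋ with ⟨m, hm⟩ | ⟨m, hm⟩
  · refine ⟨-m, Or.inl ?_⟩
    rw [neg_one_zpow_even ⟨m, hm⟩, Int.fract, hm]
    push_cast; ring
  · refine ⟨m + 1, Or.inr ?_⟩
    rw [neg_one_zpow_odd ⟨m, hm⟩, Int.fract, hm]
    push_cast; ring

lemma ww_comm (m : ℕ) (y : ℝ) : ww ((m:ℝ) * ww y) = ww ((m:ℝ) * y) := by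
  obtain ⟨j, h | h⟩ := ww_rep y
  · rw [h, show (m:ℝ) * (y + 2*j) = (m:ℝ)*y + 2*((m*j : ℤ):ℝ) by push_cast; ring,
      ww_period]
  · rw [h, show (m:ℝ) * (-y + 2*j) = -((m:ℝ)*y) + 2*((m*j : ℤ):ℝ) by push_cast; ring,
      ww_period, ww_neg]

lemma ww_mem (y : ℝ) : 0 ≤ ww y ∧ ww y ≤ 1 := by
  rw [ww_self]
  have hf0 := Int.fract_nonneg y
  have hf1 := Int.fract_lt_one y
  rcases Int.even_or_odd ⌊y⌋ with he | ho
  · rw [neg_one_zpow_even he]; constructor <;> [linarith; linarith]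
  · rw [neg_one_zpow_odd ho]; constructor <;> [linarith; linarith]

lemma tent_eq (a : ℝ) (h0 : 0 ≤ a) (h1 : a ≤ 1) : tent a = ww (2*a) := by
  unfold tent
  split_ifs with h
  · rcases lt_or_eq_of_le (by linarith : 2*a ≤ 1) with hlt | heq
    · rw [show (2*a : ℝ) = ((0:ℤ):ℝ) + 2*a by push_cast; ring,
        ww_eval 0 (2*a) (by linarith) hlt]
      norm_num
    · rw [heq, show (1:ℝ) = ((1:ℤ):ℝ) by norm_num, ww_int]
      norm_num
  · push_neg at h
    rcases lt_or_eq_of_le h1 with hlt | heq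
    · rw [show (2*a : ℝ) = ((1:ℤ):ℝ) + (2*a - 1) by push_cast; ring,
        ww_eval 1 (2*a-1) (by linarith) (by linarith)]
      norm_num; ring
    · subst heq
      rw [show (2*(1:ℝ) : ℝ) = ((2:ℤ):ℝ) by norm_num, ww_int]
      norm_num

lemma zigzag_eq (k : ℕ) (x : ℝ) : zigzag k x = ww ((k:ℝ) * x) := rfl

theorem stmt_16 (k : ℕ) (hk : 1 ≤ k) :
    ∀ x ∈ Set.Icc (0:ℝ) 1, zigzag k (tent x) = tent (zigzag k x) := by
  intro x hx
  obtain ⟨hx0, hx1⟩ := hx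
  have h2 : ww (2 * ww ((k:ℝ)*x)) = ww (2 * ((k:ℝ)*x)) := by
    have := ww_comm 2 ((k:ℝ)*x); push_cast at this; exact this
  rw [zigzag_eq, tent_eq x hx0 hx1, ww_comm k (2*x), zigzag_eq,
    tent_eq _ (ww_mem _).1 (ww_mem _).2, h2]
  ring_nf
end

section
/- Every piecewise linear nonconstant solution ξ : [0,1] → [0,1] of the functional equation ξ(f(x)) = f(ξ(x)), where f is the symmetric tent map, is of the form ξ(x) = (1 - (-1)^⌊kx⌋)/2 + (-1)^⌊kx⌋·{kx} for some natural k ≥ 1; the constant solutions are ξ ≡ 0 and ξ ≡ 2/3. -/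
def PiecewiseLinearOn (f : ℝ → ℝ) (a b : ℝ) : Prop :=
  ∃ (n : ℕ) (p : Fin (n+1) → ℝ), p 0 = a ∧ p (Fin.last n) = b ∧ StrictMono p ∧
    ∀ i : Fin n, ∃ c d : ℝ, ∀ x ∈ Set.Icc (p i.castSucc) (p i.succ), f x = c * x + d

/-- The triangle wave: `zigzag k x = w (k * x)`. -/
noncomputable def w (t : ℝ) : ℝ :=
  (1 - (-1:ℝ) ^ Int.floor t) / 2 + (-1:ℝ) ^ Int.floor t * Int.fract t

lemma w_even {t : ℝ} (h : Even ⌊t⌋) : w t = Int.fract t := by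
  rw [w, h.neg_one_zpow]; ring

lemma w_odd {t : ℝ} (h : Odd ⌊t⌋) : w t = 1 - Int.fract t := by
  rw [w, h.neg_one_zpow]; ring

lemma w_id {t : ℝ} (h0 : 0 ≤ t) (h1 : t ≤ 1) : w t = t := by
  rcases lt_or_eq_of_le h1 with h1 | h1
  · have hf : ⌊t⌋ = 0 := by
      rw [Int.floor_eq_zero_iff]; exact ⟨h0, h1⟩
    rw [w_even (by rw [hf]; exact Even.zero), Int.fract_eq_self.2 ⟨h0, h1⟩]
  · subst h1
    rw [w_odd (by norm_num : Odd ⌊(1:ℝ)⌋)]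
    simp [Int.fract_one]

lemma w_double (t : ℝ) : tent (w t) = w (2 * t) := by
  set m := ⌊t⌋ with hm
  set u := Int.fract t with hu
  have hu0 : 0 ≤ u := Int.fract_nonneg t
  have hu1 : u < 1 := Int.fract_lt_one t
  have ht : t = u + m := by
    have := Int.fract_add_floor t
    rw [← hu, ← hm] at this; linarith
  have h2t : 2 * t = 2 * u + ((2 * m : ℤ) : ℝ) := by push_cast [ht]; ring
  have hfloor : ⌊2 * t⌋ = ⌊2 * u⌋ + 2 * m := by rw [h2t, Int.floor_add_intCast]
  have hfract : Int.fract (2 * t) = Int.fract (2 * u) := by rw [h2t, Int.fract_add_intCast]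
  rcases lt_or_ge u (1/2) with hlt | hge
  · -- u < 1/2 : floor (2u) = 0
    have hf2 : ⌊(2 * u : ℝ)⌋ = 0 := by
      rw [Int.floor_eq_zero_iff]; constructor <;> [linarith; simpa using by linarith]
    have hfr2 : Int.fract (2 * u) = 2 * u := Int.fract_eq_self.2 ⟨by linarith, by linarith⟩
    have heven : Even ⌊2 * t⌋ := by rw [hfloor, hf2]; exact ⟨m, by ring⟩
    rw [w_even heven, hfract, hfr2]
    rcases Int.even_or_odd m with hme | hmo
    · rw [w_even (hm ▸ hme), ← hu, tent, if_pos (by linarith)]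
    · rw [w_odd (hm ▸ hmo), ← hu, tent, if_neg (by push_neg; linarith)]
      ring
  · -- u ≥ 1/2 : floor (2u) = 1
    have hf2 : ⌊(2 * u : ℝ)⌋ = 1 := by
      have : (1:ℝ) ≤ 2 * u := by linarith
      have : ⌊(2 * u : ℝ)⌋ = 1 := by
        apply Int.floor_eq_iff.2 <;> simp <;> constructor <;> push_cast <;> linarith
      exact this
    have hfr2 : Int.fract (2 * u) = 2 * u - 1 := by
      rw [Int.fract, hf2]; push_cast; ring
    have hodd : Odd ⌊2 * t⌋ := by rw [hfloor, hf2]; exact ⟨m, by ring⟩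
    rw [w_odd hodd, hfract, hfr2]
    rcases Int.even_or_odd m with hme | hmo
    · rw [w_even (hm ▸ hme), ← hu]
      rcases eq_or_lt_of_le hge with heq | hgt
      · rw [tent, if_pos (by linarith)]; linarith
      · rw [tent, if_neg (by push_neg; linarith)]; ring
    · rw [w_odd (hm ▸ hmo), ← hu, tent, if_pos (by linarith)]
      ring

lemma w_mem (t : ℝ) : 0 ≤ w t ∧ w t ≤ 1 := by
  have h0 := Int.fract_nonneg t
  have h1 := (Int.fract_lt_one t).le
  rcases Int.even_or_odd ⌊t⌋ with h | h
  · rw [w_even h]; exact ⟨h0, h1⟩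
  · rw [w_odd h]; constructor <;> linarith

lemma w_eq_zero {s : ℝ} (h : w s = 0) : ∃ j : ℤ, s = 2 * j := by
  rcases Int.even_or_odd ⌊s⌋ with he | ho
  · rw [w_even he] at h
    obtain ⟨j, hj⟩ := he
    refine ⟨j, ?_⟩
    have hs : s = (⌊s⌋ : ℝ) := by
      have : s - (⌊s⌋ : ℝ) = 0 := by rw [Int.self_sub_floor]; exact h
      linarith
    rw [hs, hj]; push_cast; ring
  · rw [w_odd ho] at h
    have := Int.fract_lt_one s
    linarith

/-- Spreading lemma: an identity on `[0,a]` propagates to `[0,1]` by doubling. -/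
lemma spread (ξ g : ℝ → ℝ) (a : ℝ) (ha : 0 < a)
    (hcomm : ∀ x ∈ Set.Icc (0:ℝ) 1, ξ (tent x) = tent (ξ x))
    (hg : ∀ y : ℝ, tent (g (y/2)) = g y)
    (hbase : ∀ y, 0 ≤ y → y ≤ a → ξ y = g y) :
    ∀ y ∈ Set.Icc (0:ℝ) 1, ξ y = g y := by
  have key : ∀ n : ℕ, ∀ y : ℝ, 0 ≤ y → y ≤ 1 → y ≤ 2^n * a → ξ y = g y := by
    intro n
    induction n with
    | zero => intro y hy0 _ hya; exact hbase y hy0 (by simpa using hya)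
    | succ n ih =>
      intro y hy0 hy1 hya
      have h2 : y / 2 ≤ 2^n * a := by
        rw [pow_succ] at hya; linarith
      have hmem : y / 2 ∈ Set.Icc (0:ℝ) 1 := ⟨by linarith, by linarith⟩
      have htent : tent (y/2) = y := by
        rw [tent, if_pos (by linarith)]; ring
      calc ξ y = ξ (tent (y/2)) := by rw [htent]
        _ = tent (ξ (y/2)) := hcomm _ hmem
        _ = tent (g (y/2)) := by rw [ih _ (by linarith) (by linarith) h2]
        _ = g y := hg y
  intro y hy
  obtain ⟨n, hn⟩ := pow_unbounded_of_one_lt (1/a) (by norm_num : (1:ℝ) < 2)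
  refine key n y hy.1 hy.2 ?_
  have : 1 < 2^n * a := by
    rw [div_lt_iff₀ ha] at hn; linarith
  linarith [hy.2]

lemma tent_fixed {y : ℝ} (h0 : 0 ≤ y) (h1 : y ≤ 1) (h : tent y = y) :
    y = 0 ∨ y = 2/3 := by
  rw [tent] at h
  split_ifs at h with hle
  · left; linarith
  · right; linarith

theorem stmt_17 (ξ : ℝ → ℝ) (hc : ContinuousOn ξ (Set.Icc 0 1))
    (hmaps : Set.MapsTo ξ (Set.Icc 0 1) (Set.Icc 0 1))
    (hpl : PiecewiseLinearOn ξ 0 1)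
    (hcomm : ∀ x ∈ Set.Icc (0:ℝ) 1, ξ (tent x) = tent (ξ x)) :
    (∀ x ∈ Set.Icc (0:ℝ) 1, ξ x = 0) ∨
    (∀ x ∈ Set.Icc (0:ℝ) 1, ξ x = 2/3) ∨
    (∃ k : ℕ, 1 ≤ k ∧ ∀ x ∈ Set.Icc (0:ℝ) 1, ξ x = zigzag k x) := by
  -- first linear piece
  obtain ⟨n, p, hp0, hpl', hmono, hpiece⟩ := hpl
  have hn : n ≠ 0 := by
    rintro rfl
    have h01 : (0:ℝ) = 1 :=
      hp0.symm.trans ((show p 0 = p (Fin.last 0) from rfl).trans hpl')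
    norm_num at h01
  obtain ⟨m, rfl⟩ : ∃ m, n = m + 1 := ⟨n - 1, (Nat.succ_pred_eq_of_pos (Nat.pos_of_ne_zero hn)).symm⟩
  obtain ⟨c, d, hlin⟩ := hpiece 0
  have hcast : (Fin.castSucc (0 : Fin (m+1))) = (0 : Fin (m+2)) := rfl
  set a := p (Fin.succ (0 : Fin (m+1))) with hadef
  have hpa : p (Fin.castSucc (0 : Fin (m+1))) = 0 := by rw [hcast, hp0]
  have ha0 : 0 < a := by
    rw [← hpa]; exact hmono (Fin.castSucc_lt_succ : Fin.castSucc (0 : Fin (m+1)) < Fin.succ 0)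
  have ha1 : a ≤ 1 := by
    rw [← hpl']
    exact (hmono.monotone (Fin.le_last _))
  have hlin' : ∀ x, 0 ≤ x → x ≤ a → ξ x = c * x + d := by
    intro x hx0 hxa
    exact hlin x (by rw [hpa]; exact ⟨hx0, hxa⟩)
  -- value at 0
  have h01 : (0:ℝ) ∈ Set.Icc (0:ℝ) 1 := by norm_num
  have h11 : (1:ℝ) ∈ Set.Icc (0:ℝ) 1 := by norm_num
  have hξ0mem := hmaps h01
  have htent0 : tent 0 = 0 := by rw [tent]; norm_num
  have hfix : ξ 0 = 0 ∨ ξ 0 = 2/3 := by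
    apply tent_fixed hξ0mem.1 hξ0mem.2
    have := hcomm 0 h01
    rw [htent0] at this; exact this.symm
  have hd : ξ 0 = d := by
    have := hlin' 0 le_rfl ha0.le; rw [this]; ring
  rcases hfix with hfix | hfix
  · -- ξ 0 = 0, so d = 0 and ξ x = c x on [0,a]
    have hd0 : d = 0 := by rw [← hd, hfix]
    have hlin2 : ∀ x, 0 ≤ x → x ≤ a → ξ x = c * x := by
      intro x hx0 hxa; rw [hlin' x hx0 hxa, hd0]; ring
    have hc0 : 0 ≤ c := by
      by_contra hneg
      push_neg at hneg
      have := (hmaps (⟨ha0.le, ha1⟩ : a ∈ Set.Icc (0:ℝ) 1)).1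
      rw [hlin2 a ha0.le le_rfl] at this
      nlinarith
    rcases eq_or_lt_of_le hc0 with hc | hc
    · -- c = 0 : ξ ≡ 0
      left
      apply spread ξ (fun _ => 0) a ha0 hcomm
      · intro y; show tent 0 = (0:ℝ); rw [tent]; norm_num
      · intro y hy0 hya; rw [hlin2 y hy0 hya, ← hc]; ring
    · -- c > 0 : zigzag
      right; right
      have hca : c * a ≤ 1 := by
        have := (hmaps (⟨ha0.le, ha1⟩ : a ∈ Set.Icc (0:ℝ) 1)).2
        rwa [hlin2 a ha0.le le_rfl] at this
      have hξw : ∀ y ∈ Set.Icc (0:ℝ) 1, ξ y = w (c * y) := by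
        apply spread ξ (fun y => w (c * y)) a ha0 hcomm
        · intro y
          have h := w_double (c * (y/2))
          rw [show 2 * (c * (y/2)) = c * y by ring] at h
          exact h
        · intro y hy0 hya
          rw [hlin2 y hy0 hya, w_id (by positivity)]
          have : c * y ≤ c * a := by nlinarith
          linarith
      -- integrality: ξ (tent 1) = tent (ξ 1) gives w (2c) = 0
      have h1 : ξ 1 = w c := by
        have := hξw 1 h11; simpa using this
      have hw2c : w (2 * c) = 0 := by
        have hcm := hcomm 1 h11
        rw [show tent 1 = 0 by rw [tent]; norm_num, hfix, h1, w_double c] at hcm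
        exact hcm.symm
      obtain ⟨j, hj⟩ := w_eq_zero hw2c
      have hcj : c = (j : ℝ) := by linarith
      have hj1 : 1 ≤ j := by
        by_contra hlt
        push_neg at hlt
        have : (j:ℝ) ≤ 0 := by exact_mod_cast Int.lt_add_one_iff.mp hlt
        linarith
      refine ⟨j.toNat, ?_, ?_⟩
      · omega
      · intro x hx
        have hjc : ((j.toNat : ℕ) : ℝ) = (j : ℝ) := by
          norm_cast; omega
        rw [hξw x hx]
        simp only [zigzag, w]
        rw [hjc, ← hcj]
  · -- ξ 0 = 2/3 : show c = 0, then ξ ≡ 2/3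
    right; left
    have hd23 : d = 2/3 := by rw [← hd, hfix]
    have hczero : c = 0 := by
      by_contra hc
      set x0 : ℝ := min (a/2) (1/(12*(|c|+1))) with hx0def
      have habs : 0 ≤ |c| := abs_nonneg c
      have hx0pos : 0 < x0 := lt_min (by linarith) (by positivity)
      have hx0a : x0 ≤ a/2 := min_le_left _ _
      have hx0c : x0 ≤ 1/(12*(|c|+1)) := min_le_right _ _
      have hcx0 : |c * x0| < 1/6 := by
        rw [abs_mul, abs_of_pos hx0pos]
        have h1 : |c| * x0 ≤ |c| * (1/(12*(|c|+1))) := by nlinarith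
        have h2 : |c| * (1/(12*(|c|+1))) < 1/6 := by
          rw [mul_one_div, div_lt_div_iff₀ (by positivity) (by norm_num)]
          nlinarith
        linarith
      have hcx0' := abs_lt.1 hcx0
      have hx0mem : x0 ∈ Set.Icc (0:ℝ) 1 := ⟨hx0pos.le, by linarith⟩
      have htx0 : tent x0 = 2 * x0 := by
        rw [tent, if_pos (by linarith)]
      have heq := hcomm x0 hx0mem
      rw [htx0, hlin' (2*x0) (by linarith) (by linarith),
          hlin' x0 hx0pos.le (by linarith), hd23] at heq
      rw [tent, if_neg (by push_neg; linarith)] at heq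
      have : c * x0 = 0 := by linarith
      rcases mul_eq_zero.1 this with h | h
      · exact hc h
      · linarith
    apply spread ξ (fun _ => 2/3) a ha0 hcomm
    · intro y; show tent (2/3) = (2/3:ℝ); rw [tent]; norm_num
    · intro y hy0 hya
      rw [hlin' y hy0 hya, hczero, hd23]; ring
end

section
/- Let l_{n+1}(v) = (1/2^n) · Σ_{k=0}^{n} C(n,k) · √(1 + 4^n · v^{2k} · (1-v)^{2(n-k)}) for v ∈ (0,1). Then for every v ≠ 1/2, lim_{n→∞} l_n(v) = 2. -/
lemma aux_sqrt_pow (x : ℝ) (h : 0 ≤ x) (n : ℕ) :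
    Real.sqrt (x ^ n) = Real.sqrt x ^ n := by
  rw [show x ^ n = (Real.sqrt x ^ n) ^ 2 by
        rw [← pow_mul, mul_comm, pow_mul, Real.sq_sqrt h],
      Real.sqrt_sq (by positivity)]

lemma aux_sqrt_lower {x : ℝ} (hx : 0 ≤ x) :
    1 + x - Real.sqrt x ≤ Real.sqrt (1 + x ^ 2) := by
  rcases le_total x 1 with h | h
  · have h1 : x ≤ Real.sqrt x := by
      nlinarith [Real.sq_sqrt hx, Real.sqrt_nonneg x]
    have h2 : (1 : ℝ) ≤ Real.sqrt (1 + x ^ 2) := by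
      nlinarith [Real.sq_sqrt (show (0:ℝ) ≤ 1 + x ^ 2 by positivity),
        Real.sqrt_nonneg (1 + x ^ 2)]
    linarith
  · have h1 : (1 : ℝ) ≤ Real.sqrt x := by
      rw [show (1:ℝ) = Real.sqrt 1 by simp]
      exact Real.sqrt_le_sqrt h
    have h2 : x ≤ Real.sqrt (1 + x ^ 2) := by
      nlinarith [Real.sq_sqrt (show (0:ℝ) ≤ 1 + x ^ 2 by positivity),
        Real.sqrt_nonneg (1 + x ^ 2), sq_nonneg (Real.sqrt (1 + x ^ 2) - x)]
    linarith

lemma aux_sqrt_upper {x : ℝ} (hx : 0 ≤ x) :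
    Real.sqrt (1 + x ^ 2) ≤ 1 + x := by
  rw [show (1:ℝ) + x = Real.sqrt ((1 + x) ^ 2) by rw [Real.sqrt_sq (by linarith)]]
  exact Real.sqrt_le_sqrt (by nlinarith)

theorem stmt_18 (v : ℝ) (hv : v ∈ Set.Ioo (0:ℝ) 1) (hv2 : v ≠ 1/2) :
    Filter.Tendsto (fun n : ℕ =>
      (1 / 2^n : ℝ) * ∑ k ∈ Finset.range (n+1),
        (n.choose k : ℝ) * Real.sqrt (1 + 2^(2*n) * v^(2*k) * (1-v)^(2*(n-k))))
      Filter.atTop (nhds 2) := by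
  obtain ⟨hv0, hv1⟩ := hv
  have h1v : (0:ℝ) < 1 - v := by linarith
  set A : ℝ := Real.sqrt v + Real.sqrt (1 - v) with hA
  set r : ℝ := A / Real.sqrt 2 with hrdef
  have hs2 : (0:ℝ) < Real.sqrt 2 := Real.sqrt_pos.mpr (by norm_num)
  have hA0 : 0 ≤ A := by positivity
  have hr0 : 0 ≤ r := div_nonneg hA0 hs2.le
  have hr1 : r < 1 := by
    rw [hrdef, div_lt_one hs2]
    rw [show A < Real.sqrt 2 ↔ A < Real.sqrt 2 from Iff.rfl]
    have hlt : A ^ 2 < 2 := by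
      have hmul : Real.sqrt v * Real.sqrt (1 - v) = Real.sqrt (v * (1 - v)) :=
        (Real.sqrt_mul hv0.le _).symm
      have hvv : v * (1 - v) < 1/4 := by
        nlinarith [pow_two_pos_of_ne_zero (sub_ne_zero.mpr hv2)]
      have hsq : Real.sqrt (v * (1 - v)) < 1/2 := by
        rw [show (1/2 : ℝ) = Real.sqrt (1/4) by
              rw [show (1/4 : ℝ) = (1/2)^2 by norm_num, Real.sqrt_sq (by norm_num)]]
        exact Real.sqrt_lt_sqrt (by positivity) hvv
      have e1 : Real.sqrt v ^ 2 = v := Real.sq_sqrt hv0.le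
      have e2 : Real.sqrt (1 - v) ^ 2 = 1 - v := Real.sq_sqrt h1v.le
      rw [hA]
      nlinarith [hmul, hsq]
    exact (Real.lt_sqrt hA0).mpr hlt
  -- key bounds
  have key : ∀ n : ℕ,
      2 - r ^ n ≤ (1 / 2^n : ℝ) * ∑ k ∈ Finset.range (n+1),
        (n.choose k : ℝ) * Real.sqrt (1 + 2^(2*n) * v^(2*k) * (1-v)^(2*(n-k))) ∧
      (1 / 2^n : ℝ) * ∑ k ∈ Finset.range (n+1),
        (n.choose k : ℝ) * Real.sqrt (1 + 2^(2*n) * v^(2*k) * (1-v)^(2*(n-k))) ≤ 2 := by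
    intro n
    set x : ℕ → ℝ := fun k => 2^n * v^k * (1-v)^(n-k) with hx
    have hx0 : ∀ k, 0 ≤ x k := by intro k; positivity
    have hxsq : ∀ k, 2^(2*n) * v^(2*k) * (1-v)^(2*(n-k)) = (x k) ^ 2 := by
      intro k
      rw [hx]
      rw [pow_mul', pow_mul', pow_mul']
      ring
    -- sums
    have hsum1 : ∑ k ∈ Finset.range (n+1), (n.choose k : ℝ) = 2 ^ n := by
      rw [← Nat.cast_sum]
      rw [Nat.sum_range_choose]
      push_cast
      ring
    have hsum2 : ∑ k ∈ Finset.range (n+1), (n.choose k : ℝ) * x k = 2 ^ n := by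
      have := add_pow v (1 - v) n
      simp only [add_sub_cancel, one_pow] at this
      rw [hx]
      calc ∑ k ∈ Finset.range (n+1), (n.choose k : ℝ) * (2^n * v^k * (1-v)^(n-k))
          = 2^n * ∑ k ∈ Finset.range (n+1), v^k * (1-v)^(n-k) * (n.choose k : ℝ) := by
            rw [Finset.mul_sum]; apply Finset.sum_congr rfl; intro k _; ring
        _ = 2^n := by rw [← this]; ring
    have hsum3 : ∑ k ∈ Finset.range (n+1), (n.choose k : ℝ) * Real.sqrt (x k)
        = Real.sqrt 2 ^ n * A ^ n := by
      have hsx : ∀ k ∈ Finset.range (n+1), (n.choose k : ℝ) * Real.sqrt (x k)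
          = Real.sqrt 2 ^ n * (Real.sqrt v ^ k * Real.sqrt (1-v) ^ (n-k) * (n.choose k : ℝ)) := by
        intro k _
        rw [hx]
        rw [Real.sqrt_mul (by positivity), Real.sqrt_mul (by positivity)]
        rw [aux_sqrt_pow 2 (by norm_num), aux_sqrt_pow v hv0.le, aux_sqrt_pow (1-v) h1v.le]
        ring
      rw [Finset.sum_congr rfl hsx, ← Finset.mul_sum]
      congr 1
      rw [← add_pow, hA]
    have h2n : (0:ℝ) < 2 ^ n := by positivity
    constructor
    · -- lower bound
      have hterm : ∀ k ∈ Finset.range (n+1),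
          (n.choose k : ℝ) * (1 + x k - Real.sqrt (x k)) ≤
          (n.choose k : ℝ) * Real.sqrt (1 + 2^(2*n) * v^(2*k) * (1-v)^(2*(n-k))) := by
        intro k _
        rw [hxsq k]
        exact mul_le_mul_of_nonneg_left (aux_sqrt_lower (hx0 k)) (Nat.cast_nonneg _)
      have hle := Finset.sum_le_sum hterm
      have hval : ∑ k ∈ Finset.range (n+1), (n.choose k : ℝ) * (1 + x k - Real.sqrt (x k))
          = 2^n + 2^n - Real.sqrt 2 ^ n * A ^ n := by
        have : ∀ k ∈ Finset.range (n+1), (n.choose k : ℝ) * (1 + x k - Real.sqrt (x k))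
            = (n.choose k : ℝ) + (n.choose k : ℝ) * x k - (n.choose k : ℝ) * Real.sqrt (x k) := by
          intro k _; ring
        rw [Finset.sum_congr rfl this, Finset.sum_sub_distrib, Finset.sum_add_distrib,
          hsum1, hsum2, hsum3]
      have hrn : (1 / 2^n : ℝ) * (Real.sqrt 2 ^ n * A ^ n) = r ^ n := by
        rw [hrdef, div_pow]
        have h2 : (2:ℝ) ^ n = Real.sqrt 2 ^ n * Real.sqrt 2 ^ n := by
          rw [← mul_pow, Real.mul_self_sqrt (by norm_num)]
        field_simp [h2]
        ring_nf; rw [pow_mul', Real.sq_sqrt (by norm_num)]; ring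
      have := mul_le_mul_of_nonneg_left hle (le_of_lt (by positivity : (0:ℝ) < 1 / 2^n))
      rw [hval] at this
      calc 2 - r ^ n = (1 / 2^n : ℝ) * (2^n + 2^n - Real.sqrt 2 ^ n * A ^ n) := by
            rw [mul_sub, ← hrn]; field_simp; ring
        _ ≤ _ := this
    · -- upper bound
      have hterm : ∀ k ∈ Finset.range (n+1),
          (n.choose k : ℝ) * Real.sqrt (1 + 2^(2*n) * v^(2*k) * (1-v)^(2*(n-k))) ≤
          (n.choose k : ℝ) * (1 + x k) := by
        intro k _
        rw [hxsq k]
        exact mul_le_mul_of_nonneg_left (aux_sqrt_upper (hx0 k)) (Nat.cast_nonneg _)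
      have hle := Finset.sum_le_sum hterm
      have hval : ∑ k ∈ Finset.range (n+1), (n.choose k : ℝ) * (1 + x k)
          = 2^n + 2^n := by
        have : ∀ k ∈ Finset.range (n+1), (n.choose k : ℝ) * (1 + x k)
            = (n.choose k : ℝ) + (n.choose k : ℝ) * x k := by intro k _; ring
        rw [Finset.sum_congr rfl this, Finset.sum_add_distrib, hsum1, hsum2]
      have := mul_le_mul_of_nonneg_left hle (le_of_lt (by positivity : (0:ℝ) < 1 / 2^n))
      rw [hval] at this
      calc _ ≤ (1 / 2^n : ℝ) * (2^n + 2^n) := this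
        _ = 2 := by field_simp; ring
  -- squeeze
  have hlow : Filter.Tendsto (fun n : ℕ => 2 - r ^ n) Filter.atTop (nhds 2) := by
    have := (tendsto_pow_atTop_nhds_zero_of_lt_one hr0 hr1).const_sub 2
    simpa using this
  exact tendsto_of_tendsto_of_tendsto_of_le_of_le hlow tendsto_const_nhds
    (fun n => (key n).1) (fun n => (key n).2)
end
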